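/- arXiv:2004.08080 — 7 statements merged into one kernel-verified Lean document; each statement's English description precedes it below -/
import Mathlib

section
/- Let G be a simple connected graph with n vertices, m edges, and maximum degree Δ. Let M(G) be the n×n matrix with entry √((d_i+d_j-2)/(d_i d_j)) if vertices v_i and v_j are adjacent and 0 otherwise, where d_i is the degree of v_i. Then the largest eigenvalue ρ_ABC(G) of M(G) satisfies ρ_ABC(G) ≤ √(Δ + (2m−n+1)/Δ − 2). -/
open scoped Classical
open Finset Matrix

noncomputable def ABCMatrix {n : ℕ} (G : SimpleGraph (Fin n)) : Matrix (Fin n) (Fin n) ℝ :=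
  fun i j => if G.Adj i j then
    Real.sqrt (((G.degree i : ℝ) + (G.degree j : ℝ) - 2) / ((G.degree i : ℝ) * (G.degree j : ℝ)))
  else 0

private lemma amgm' (a b r s : ℝ) (hr : 0 < r) (hs : 0 < s) :
    a * b ≤ (a ^ 2 * (s / r) + b ^ 2 * (r / s)) / 2 := by
  have h : 0 ≤ (a * s - b * r) ^ 2 := sq_nonneg _
  have e : (a ^ 2 * (s / r) + b ^ 2 * (r / s)) / 2 - a * b = (a * s - b * r) ^ 2 / (2 * (r * s)) := by
    field_simp
    ring
  nlinarith [div_nonneg h (by positivity : (0:ℝ) ≤ 2 * (r * s))]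

private lemma key_ineq (d S T D : ℝ) (hd : 1 ≤ d) (hdD : d ≤ D) (hDT : D ≤ T)
    (hST : S ≤ T) (hSD : S ≤ d * D) : d ^ 2 * D + S * D ≤ d * D ^ 2 + d * T := by
  have hD0 : (0:ℝ) ≤ D := by linarith
  rcases le_total T (d * D) with h | h
  · nlinarith [mul_nonneg (sub_nonneg.2 hdD) (sub_nonneg.2 h),
      mul_le_mul_of_nonneg_right hST hD0]
  · nlinarith [mul_le_mul_of_nonneg_right hSD hD0,
      mul_le_mul_of_nonneg_left h (by linarith : (0:ℝ) ≤ d)]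

noncomputable def rhoABC {n : ℕ} (G : SimpleGraph (Fin n)) : ℝ :=
  sSup {r : ℝ | ∃ x : Fin n → ℝ, ∑ i, x i ^ 2 = 1 ∧ r = x ⬝ᵥ (ABCMatrix G).mulVec x}

theorem stmt0 {n : ℕ} (hn : 2 ≤ n) (G : SimpleGraph (Fin n)) (hG : G.Connected) :
    rhoABC G ≤ Real.sqrt ((G.maxDegree : ℝ) +
      (2 * (G.edgeFinset.card : ℝ) - (n : ℝ) + 1) / (G.maxDegree : ℝ) - 2) := by
  classical
  have hne : Nonempty (Fin n) := ⟨⟨0, by omega⟩⟩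
  -- degrees positive
  have hdegpos : ∀ i : Fin n, 0 < G.degree i := by
    intro i
    rw [SimpleGraph.degree_pos_iff_exists_adj]
    obtain ⟨j, hj⟩ : ∃ j : Fin n, j ≠ i := by
      have h1 : 1 < Fintype.card (Fin n) := by rw [Fintype.card_fin]; omega
      exact Fintype.exists_ne_of_one_lt_card h1 i
    obtain ⟨p⟩ := hG.preconnected i j
    cases p with
    | nil => exact absurd rfl hj.symm
    | cons h q => exact ⟨_, h⟩
  set d : Fin n → ℝ := fun i => (G.degree i : ℝ) with hd_def
  have hd1 : ∀ i, (1:ℝ) ≤ d i := by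
    intro i
    simp only [hd_def]
    exact_mod_cast hdegpos i
  set Δ : ℝ := (G.maxDegree : ℝ) with hΔ_def
  have hdΔ : ∀ i, d i ≤ Δ := by
    intro i
    simp only [hd_def, hΔ_def]
    exact_mod_cast G.degree_le_maxDegree i
  have hΔ1 : (1:ℝ) ≤ Δ := le_trans (hd1 (Classical.arbitrary _)) (hdΔ _)
  set m : ℝ := (G.edgeFinset.card : ℝ) with hm_def
  have hsum : ∑ i, d i = 2 * m := by
    rw [hd_def, hm_def]
    beta_reduce
    exact_mod_cast G.sum_degrees_eq_twice_card_edges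
  set T : ℝ := 2 * m - n + 1 with hT_def
  -- Δ ≤ T
  have hΔT : Δ ≤ T := by
    obtain ⟨v, hv⟩ := G.exists_maximal_degree_vertex
    have h1 : ∑ i ∈ univ.erase v, (1:ℝ) ≤ ∑ i ∈ univ.erase v, d i :=
      Finset.sum_le_sum (fun i _ => hd1 i)
    have h2 : ∑ i ∈ univ.erase v, d i + d v = ∑ i, d i :=
      Finset.sum_erase_add univ d (mem_univ v)
    have h3 : ∑ i ∈ univ.erase v, (1:ℝ) = (n:ℝ) - 1 := by
      rw [Finset.sum_const, Finset.card_erase_of_mem (mem_univ v), card_univ,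
        Fintype.card_fin, nsmul_eq_mul, mul_one, Nat.cast_sub (by omega : 1 ≤ n), Nat.cast_one]
    have h4 : Δ = d v := by rw [hΔ_def, hd_def]; exact_mod_cast congrArg _ hv
    rw [hsum] at h2
    rw [h3] at h1
    rw [hT_def]
    linarith
  -- neighbor sums
  set S : Fin n → ℝ := fun i => ∑ j ∈ G.neighborFinset i, d j with hS_def
  have hcardN : ∀ i, ((G.neighborFinset i).card : ℝ) = d i := by
    intro i; rw [hd_def]; exact_mod_cast congrArg Nat.cast (G.card_neighborFinset_eq_degree i)
  have hS_dΔ : ∀ i, S i ≤ d i * Δ := by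
    intro i
    calc S i ≤ ∑ _j ∈ G.neighborFinset i, Δ := Finset.sum_le_sum (fun j _ => hdΔ j)
      _ = ((G.neighborFinset i).card : ℝ) * Δ := by rw [Finset.sum_const, nsmul_eq_mul]
      _ = d i * Δ := by rw [hcardN]
  have hS_T : ∀ i, S i ≤ T := by
    intro i
    have hsplit : ∑ j ∈ univ \ G.neighborFinset i, d j + S i = ∑ j, d j :=
      Finset.sum_sdiff (Finset.subset_univ _)
    have hi_mem : i ∈ univ \ G.neighborFinset i :=
      Finset.mem_sdiff.2 ⟨mem_univ i, G.notMem_neighborFinset_self i⟩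
    have hlow : ∑ j ∈ univ \ G.neighborFinset i, (1:ℝ) + (d i - 1)
        ≤ ∑ j ∈ univ \ G.neighborFinset i, d j := by
      have h5 : ∑ j ∈ univ \ G.neighborFinset i, (d j - 1) ≥ d i - 1 :=
        Finset.single_le_sum (f := fun j => d j - 1)
          (fun j _ => by show (0:ℝ) ≤ d j - 1; linarith [hd1 j]) hi_mem
      have h6 : ∑ j ∈ univ \ G.neighborFinset i, (d j - 1)
          = ∑ j ∈ univ \ G.neighborFinset i, d j
            - ∑ j ∈ univ \ G.neighborFinset i, (1:ℝ) := by
        rw [Finset.sum_sub_distrib]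
      linarith
    have hcard : ∑ j ∈ univ \ G.neighborFinset i, (1:ℝ) = (n:ℝ) - d i := by
      rw [Finset.sum_const, nsmul_eq_mul, mul_one,
        Finset.card_sdiff_of_subset (Finset.subset_univ _), card_univ, Fintype.card_fin]
      rw [Nat.cast_sub (by
        calc G.degree i = (G.neighborFinset i).card := rfl
          _ ≤ (univ : Finset (Fin n)).card := Finset.card_le_card (Finset.subset_univ _)
          _ = n := by rw [card_univ, Fintype.card_fin])]
      rw [hd_def]
      rfl
    rw [hsum] at hsplit
    rw [hT_def]
    rw [hcard] at hlow
    linarith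
  set C : ℝ := Δ + T / Δ - 2 with hC_def
  have hΔpos : (0:ℝ) < Δ := by linarith
  have hC0 : 0 ≤ C := by
    have h7 : (1:ℝ) ≤ T / Δ := (one_le_div hΔpos).2 hΔT
    rw [hC_def]; linarith
  have hkeyC : ∀ i, d i * (d i - 2) + S i ≤ d i * C := by
    intro i
    rw [← mul_le_mul_iff_left₀ hΔpos]
    have e : d i * C * Δ = d i * Δ ^ 2 + d i * T - 2 * d i * Δ := by
      rw [hC_def]; field_simp
    nlinarith [key_ineq (d i) (S i) T Δ (hd1 i) (hdΔ i) hΔT (hS_T i) (hS_dΔ i)]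
  have hrow : ∀ i, ∑ j ∈ G.neighborFinset i, Real.sqrt (d i + d j - 2)
      ≤ d i * Real.sqrt C := by
    intro i
    have hdpos : (0:ℝ) < d i := lt_of_lt_of_le one_pos (hd1 i)
    have hnn : ∀ j ∈ G.neighborFinset i, (0:ℝ) ≤ d i + d j - 2 :=
      fun j _ => by linarith [hd1 i, hd1 j]
    have hsum0 : 0 ≤ ∑ j ∈ G.neighborFinset i, Real.sqrt (d i + d j - 2) :=
      Finset.sum_nonneg fun j _ => Real.sqrt_nonneg _
    have hCS : (∑ j ∈ G.neighborFinset i, Real.sqrt (d i + d j - 2)) ^ 2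
        ≤ d i * (d i * (d i - 2) + S i) := by
      calc (∑ j ∈ G.neighborFinset i, Real.sqrt (d i + d j - 2)) ^ 2
          ≤ ((G.neighborFinset i).card : ℝ)
            * ∑ j ∈ G.neighborFinset i, (Real.sqrt (d i + d j - 2)) ^ 2 :=
            sq_sum_le_card_mul_sum_sq
        _ = d i * ∑ j ∈ G.neighborFinset i, (d i + d j - 2) := by
            rw [hcardN]
            congr 1
            exact Finset.sum_congr rfl fun j hj => Real.sq_sqrt (hnn j hj)
        _ = d i * (d i * (d i - 2) + S i) := by
            congr 1
            have e2 : ∑ j ∈ G.neighborFinset i, (d i + d j - 2)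
                = ∑ j ∈ G.neighborFinset i, ((d i - 2) + d j) :=
              Finset.sum_congr rfl fun j _ => by ring
            rw [e2, Finset.sum_add_distrib, Finset.sum_const, nsmul_eq_mul, hcardN]
    have h2 : (∑ j ∈ G.neighborFinset i, Real.sqrt (d i + d j - 2)) ^ 2
        ≤ (d i * Real.sqrt C) ^ 2 := by
      have h3 : d i * (d i * (d i - 2) + S i) ≤ d i ^ 2 * C := by
        nlinarith [hkeyC i]
      calc (∑ j ∈ G.neighborFinset i, Real.sqrt (d i + d j - 2)) ^ 2
          ≤ d i * (d i * (d i - 2) + S i) := hCS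
        _ ≤ d i ^ 2 * C := h3
        _ = (d i * Real.sqrt C) ^ 2 := by rw [mul_pow, Real.sq_sqrt hC0]
    exact (pow_le_pow_iff_left₀ hsum0 (by positivity) two_ne_zero).1 h2
  -- matrix facts
  have hM0 : ∀ i j, 0 ≤ ABCMatrix G i j := by
    intro i j
    unfold ABCMatrix
    split
    · exact Real.sqrt_nonneg _
    · exact le_rfl
  have hMsym : ∀ i j, ABCMatrix G j i = ABCMatrix G i j := by
    intro i j
    unfold ABCMatrix
    by_cases h : G.Adj i j
    · rw [if_pos h, if_pos h.symm]
      congr 1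
      ring
    · rw [if_neg (fun h' => h h'.symm), if_neg h]
  have hmain : ∀ x : Fin n → ℝ, ∑ i, x i ^ 2 = 1 →
      x ⬝ᵥ (ABCMatrix G).mulVec x ≤ Real.sqrt C := by
    intro x hx
    set s : Fin n → ℝ := fun i => Real.sqrt (d i) with hs_def
    have hspos : ∀ i, 0 < s i := fun i => Real.sqrt_pos.2 (by linarith [hd1 i])
    have hexpand : x ⬝ᵥ (ABCMatrix G).mulVec x
        = ∑ i, ∑ j, ABCMatrix G i j * (x i * x j) := by
      simp only [dotProduct, Matrix.mulVec, Finset.mul_sum]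
      exact Finset.sum_congr rfl fun i _ => Finset.sum_congr rfl fun j _ => by ring
    have hR : ∀ i, ∑ j, ABCMatrix G i j * (s j / s i)
        = (∑ j ∈ G.neighborFinset i, Real.sqrt (d i + d j - 2)) / d i := by
      intro i
      have hdi : (0:ℝ) ≤ d i := by linarith [hd1 i]
      rw [Finset.sum_div, SimpleGraph.neighborFinset_eq_filter, Finset.sum_filter]
      refine Finset.sum_congr rfl fun j _ => ?_
      unfold ABCMatrix
      by_cases h : G.Adj i j
      · rw [if_pos h, if_pos h]
        have hdj : (0:ℝ) ≤ d j := by linarith [hd1 j]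
        have ha : (0:ℝ) ≤ d i + d j - 2 := by linarith [hd1 i, hd1 j]
        have hsj : s j / s i = Real.sqrt (d j / d i) := (Real.sqrt_div hdj _).symm
        rw [hsj, ← Real.sqrt_mul (by positivity : (0:ℝ) ≤ (d i + d j - 2) / (d i * d j))]
        have hdi' : d i ≠ 0 := by linarith [hd1 i]
        have hdj' : d j ≠ 0 := by linarith [hd1 j]
        have e3 : (d i + d j - 2) / (d i * d j) * (d j / d i) = (d i + d j - 2) / d i ^ 2 := by
          field_simp
        rw [e3, Real.sqrt_div ha, Real.sqrt_sq hdi]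
      · rw [if_neg h, if_neg h, zero_mul]
    have hstepA : ∑ i, ∑ j, ABCMatrix G i j * (x i * x j)
        ≤ ∑ i, ∑ j, ABCMatrix G i j * ((x i ^ 2 * (s j / s i) + x j ^ 2 * (s i / s j)) / 2) := by
      refine Finset.sum_le_sum fun i _ => Finset.sum_le_sum fun j _ => ?_
      exact mul_le_mul_of_nonneg_left
        (amgm' (x i) (x j) (s i) (s j) (hspos i) (hspos j)) (hM0 i j)
    have hsw : ∑ i, ∑ j, ABCMatrix G i j * (x j ^ 2 * (s i / s j))
        = ∑ i, ∑ j, ABCMatrix G i j * (x i ^ 2 * (s j / s i)) := by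
      rw [Finset.sum_comm]
      exact Finset.sum_congr rfl fun i _ => Finset.sum_congr rfl fun j _ => by rw [hMsym]
    have hsplit2 : ∑ i, ∑ j, ABCMatrix G i j * ((x i ^ 2 * (s j / s i) + x j ^ 2 * (s i / s j)) / 2)
        = ∑ i, ∑ j, ABCMatrix G i j * (x i ^ 2 * (s j / s i)) := by
      have e1 : ∀ i j : Fin n,
          ABCMatrix G i j * ((x i ^ 2 * (s j / s i) + x j ^ 2 * (s i / s j)) / 2)
          = ABCMatrix G i j * (x i ^ 2 * (s j / s i)) / 2
            + ABCMatrix G i j * (x j ^ 2 * (s i / s j)) / 2 := fun i j => by ring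
      simp only [e1, Finset.sum_add_distrib, ← Finset.sum_div]
      rw [hsw]
      ring
    have hfact : ∑ i, ∑ j, ABCMatrix G i j * (x i ^ 2 * (s j / s i))
        = ∑ i, x i ^ 2 * ((∑ j ∈ G.neighborFinset i, Real.sqrt (d i + d j - 2)) / d i) := by
      refine Finset.sum_congr rfl fun i _ => ?_
      rw [← hR i, Finset.mul_sum]
      exact Finset.sum_congr rfl fun j _ => by ring
    have hRbound : ∀ i, (∑ j ∈ G.neighborFinset i, Real.sqrt (d i + d j - 2)) / d i
        ≤ Real.sqrt C := by
      intro i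
      rw [div_le_iff₀ (by linarith [hd1 i] : (0:ℝ) < d i)]
      calc ∑ j ∈ G.neighborFinset i, Real.sqrt (d i + d j - 2)
          ≤ d i * Real.sqrt C := hrow i
        _ = Real.sqrt C * d i := mul_comm _ _
    have hfin1 : ∑ i, x i ^ 2 * ((∑ j ∈ G.neighborFinset i, Real.sqrt (d i + d j - 2)) / d i)
        ≤ ∑ i, x i ^ 2 * Real.sqrt C :=
      Finset.sum_le_sum fun i _ => mul_le_mul_of_nonneg_left (hRbound i) (sq_nonneg _)
    have hfin2 : ∑ i, x i ^ 2 * Real.sqrt C = Real.sqrt C := by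
      rw [← Finset.sum_mul, hx, one_mul]
    calc x ⬝ᵥ (ABCMatrix G).mulVec x
        = ∑ i, ∑ j, ABCMatrix G i j * (x i * x j) := hexpand
      _ ≤ ∑ i, ∑ j, ABCMatrix G i j * ((x i ^ 2 * (s j / s i) + x j ^ 2 * (s i / s j)) / 2) :=
          hstepA
      _ = ∑ i, ∑ j, ABCMatrix G i j * (x i ^ 2 * (s j / s i)) := hsplit2
      _ = ∑ i, x i ^ 2 * ((∑ j ∈ G.neighborFinset i, Real.sqrt (d i + d j - 2)) / d i) := hfact
      _ ≤ ∑ i, x i ^ 2 * Real.sqrt C := hfin1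
      _ = Real.sqrt C := hfin2
  unfold rhoABC
  refine Real.sSup_le ?_ (Real.sqrt_nonneg _)
  rintro r ⟨x, hx, rfl⟩
  exact hmain x hx
end

section
/- For a connected graph G with degrees d_i, ABC matrix M, and the vector x = (√d_1, ..., √d_n), for every vertex v_i one has (Mx)_i ≤ √(d_i² − 2d_i + Σ_{v_j ∼ v_i} d_j), where the sum is over neighbors of v_i. -/
open scoped Classical
open Finset Matrix

theorem stmt2 {n : ℕ} (G : SimpleGraph (Fin n)) (hd : ∀ i, 1 ≤ G.degree i) (i : Fin n) :
    (ABCMatrix G).mulVec (fun j => Real.sqrt (G.degree j)) i ≤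
      Real.sqrt ((G.degree i : ℝ) ^ 2 - 2 * (G.degree i : ℝ) +
        ∑ j ∈ G.neighborFinset i, (G.degree j : ℝ)) := by
  have hdi : (0:ℝ) < G.degree i := by exact_mod_cast hd i
  have key : (ABCMatrix G).mulVec (fun j => Real.sqrt (G.degree j)) i =
      ∑ j ∈ G.neighborFinset i,
        Real.sqrt (((G.degree i : ℝ) + (G.degree j : ℝ) - 2) / (G.degree i : ℝ)) := by
    rw [mulVec, dotProduct]
    rw [← Finset.sum_subset (Finset.subset_univ (G.neighborFinset i))]
    · refine Finset.sum_congr rfl fun j hj => ?_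
      rw [SimpleGraph.mem_neighborFinset] at hj
      have hdj : (0:ℝ) < G.degree j := by exact_mod_cast hd j
      have hdj1 : (1:ℝ) ≤ G.degree j := by exact_mod_cast hd j
      have hdi1 : (1:ℝ) ≤ G.degree i := by exact_mod_cast hd i
      simp only [ABCMatrix, if_pos hj]
      rw [← Real.sqrt_mul (div_nonneg (by linarith) (by positivity))]
      congr 1
      field_simp
    · intro j _ hj
      rw [SimpleGraph.mem_neighborFinset] at hj
      simp [ABCMatrix, hj]
  rw [key]
  have hnn : ∀ j ∈ G.neighborFinset i,
      (0:ℝ) ≤ Real.sqrt (((G.degree i : ℝ) + (G.degree j : ℝ) - 2) / (G.degree i : ℝ)) :=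
    fun j _ => Real.sqrt_nonneg _
  have hdi1 : (1:ℝ) ≤ G.degree i := by exact_mod_cast hd i
  have hcard : ((G.neighborFinset i).card : ℝ) *
      ∑ j ∈ G.neighborFinset i,
        ((G.degree i : ℝ) + (G.degree j : ℝ) - 2) / (G.degree i : ℝ) =
      (G.degree i : ℝ) ^ 2 - 2 * (G.degree i : ℝ) +
        ∑ j ∈ G.neighborFinset i, (G.degree j : ℝ) := by
    rw [← Finset.sum_div, Finset.sum_sub_distrib, Finset.sum_add_distrib,
      Finset.sum_const, Finset.sum_const, SimpleGraph.card_neighborFinset_eq_degree,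
      nsmul_eq_mul, nsmul_eq_mul]
    field_simp
    ring
  rw [← hcard]
  rw [show (∑ j ∈ G.neighborFinset i,
      Real.sqrt (((G.degree i : ℝ) + (G.degree j : ℝ) - 2) / (G.degree i : ℝ))) =
      |∑ j ∈ G.neighborFinset i,
      Real.sqrt (((G.degree i : ℝ) + (G.degree j : ℝ) - 2) / (G.degree i : ℝ))| from
    (abs_of_nonneg (Finset.sum_nonneg hnn)).symm]
  rw [← Real.sqrt_sq_eq_abs]
  apply Real.sqrt_le_sqrt
  calc (∑ j ∈ G.neighborFinset i,
      Real.sqrt (((G.degree i : ℝ) + (G.degree j : ℝ) - 2) / (G.degree i : ℝ))) ^ 2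
      ≤ (G.neighborFinset i).card * ∑ j ∈ G.neighborFinset i,
        Real.sqrt (((G.degree i : ℝ) + (G.degree j : ℝ) - 2) / (G.degree i : ℝ)) ^ 2 := by
        exact sq_sum_le_card_mul_sum_sq
    _ = (G.neighborFinset i).card * ∑ j ∈ G.neighborFinset i,
        ((G.degree i : ℝ) + (G.degree j : ℝ) - 2) / (G.degree i : ℝ) := by
        congr 1
        refine Finset.sum_congr rfl fun j hj => ?_
        rw [SimpleGraph.mem_neighborFinset] at hj
        have hdj1 : (1:ℝ) ≤ G.degree j := by exact_mod_cast hd j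
        rw [Real.sq_sqrt (div_nonneg (by linarith) (by positivity))]
end

section
/- Let G be a connected c-cyclic graph with n ≥ 3 vertices (i.e., m = n − 1 + c edges) with c ≤ (n−1)/2. Then ρ_ABC(G) ≤ √(n − 2 + 2c/(n−1)). -/
open scoped Classical
open Finset Matrix

private lemma amgm_aux (a b gi gk : ℝ) (hi : 0 < gi) (hk : 0 < gk) :
    a * b ≤ a ^ 2 * (gk / (2 * gi)) + b ^ 2 * (gi / (2 * gk)) := by
  rw [show a ^ 2 * (gk / (2 * gi)) + b ^ 2 * (gi / (2 * gk))
      = (a ^ 2 * (gk * gk) + b ^ 2 * (gi * gi)) / (2 * (gi * gk)) by field_simp,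
    le_div_iff₀ (by positivity)]
  nlinarith [sq_nonneg (a * gk - b * gi)]

private lemma keyNat (d o W U q c : ℕ)
    (h2 : (d + 1) + W + U = 2 * ((d + 1) + o) + 2 * c)
    (hW : W ≤ (d + 1) * (d + 1) + q) (hqU : q ≤ U) (hqDo : q ≤ (d + 1) * o)
    (hoU : o ≤ U) :
    ((d + 1) * (d + 1) + W) * ((d + 1) + o) ≤
      2 * (d + 1) * ((d + 1) + o) + (d + o) * ((d + 1) + o) * (d + 1) + 2 * c * (d + 1) := by
  have hMain : o * W + (d + 1) * o ≤ (d + 1) * (d + 1) * o + (d + 1) * (o * o) + (d + 1) * U := by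
    rcases Nat.eq_zero_or_pos o with ho | ho
    · subst ho; simp
    have hW' : o * W ≤ o * ((d + 1) * (d + 1) + q) := Nat.mul_le_mul_left _ hW
    rcases le_or_gt o (d + 1) with h | h
    · have h1 : o * q ≤ (d + 1) * U :=
        le_trans (Nat.mul_le_mul_right q h) (Nat.mul_le_mul_left _ hqU)
      have h3 : (d + 1) * o ≤ (d + 1) * (o * o) :=
        Nat.mul_le_mul_left _ (Nat.le_mul_of_pos_left o ho)
      nlinarith [hW', h1, h3]
    · have h1 : o * q ≤ o * ((d + 1) * o) := Nat.mul_le_mul_left _ hqDo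
      have h3 : (d + 1) * o ≤ (d + 1) * U := Nat.mul_le_mul_left _ hoU
      have h4 : (d + 1) * o ≤ (d + 1) * (o * o) :=
        Nat.mul_le_mul_left _ (Nat.le_mul_of_pos_left o ho)
      nlinarith [hW', h1, h3, h4]
  nlinarith [hMain, congrArg (· * (d + 1)) h2]

theorem stmt5 {n c : ℕ} (hn : 3 ≤ n) (G : SimpleGraph (Fin n)) (hG : G.Connected)
    (hm : G.edgeFinset.card = n - 1 + c) (hc : (c : ℝ) ≤ ((n : ℝ) - 1) / 2) :
    rhoABC G ≤ Real.sqrt ((n : ℝ) - 2 + 2 * (c : ℝ) / ((n : ℝ) - 1)) := by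
  classical
  have hnR : (3 : ℝ) ≤ (n : ℝ) := by exact_mod_cast hn
  set T : ℝ := (n : ℝ) - 2 + 2 * (c : ℝ) / ((n : ℝ) - 1) with hT
  have hn1pos : (0 : ℝ) < (n : ℝ) - 1 := by linarith
  have hT0 : 0 ≤ T := by
    have : 0 ≤ 2 * (c : ℝ) / ((n : ℝ) - 1) := by positivity
    simp only [hT]; linarith
  set B : ℝ := Real.sqrt T with hB
  have hB0 : 0 ≤ B := Real.sqrt_nonneg _
  -- all degrees positive
  have hdeg : ∀ v : Fin n, 0 < G.degree v := by
    intro v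
    rw [G.degree_pos_iff_exists_adj]
    obtain ⟨u, hu⟩ : ∃ u : Fin n, u ≠ v := by
      apply Fintype.exists_ne_of_one_lt_card
      simp only [Fintype.card_fin]; omega
    obtain ⟨w⟩ := hG.preconnected v u
    cases w with
    | nil => exact absurd rfl hu
    | cons h _ => exact ⟨_, h⟩
  have hdegR : ∀ v : Fin n, (1 : ℝ) ≤ (G.degree v : ℝ) := by
    intro v; exact_mod_cast hdeg v
  -- the key counting estimate, per vertex
  have hkey : ∀ i : Fin n,
      (G.degree i : ℝ) * (G.degree i : ℝ) - 2 * (G.degree i : ℝ)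
        + (∑ k ∈ G.neighborFinset i, (G.degree k : ℝ)) ≤ T * (G.degree i : ℝ) := by
    intro i
    set Ni := G.neighborFinset i with hNi
    set Dn := G.degree i with hDn
    have hNicard : Ni.card = Dn := G.card_neighborFinset_eq_degree i
    set out : Finset (Fin n) := Finset.univ \ insert i Ni with hout
    set o := out.card with ho
    set Wn := ∑ k ∈ Ni, G.degree k with hWn
    set Un := ∑ v ∈ out, G.degree v with hUn
    set qn := ∑ k ∈ Ni, (G.neighborFinset k ∩ out).card with hqn
    have hiNi : i ∉ Ni := G.notMem_neighborFinset_self i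
    have hins : (insert i Ni).card = Dn + 1 := by
      rw [Finset.card_insert_of_notMem hiNi, hNicard]
    have hinsle : Dn + 1 ≤ n := by
      have h := Finset.card_le_univ (insert i Ni)
      rw [hins] at h
      simpa using h
    have hoeq : Dn + 1 + o = n := by
      have : out.card = n - (Dn + 1) := by
        rw [hout, Finset.card_sdiff_of_subset (Finset.subset_univ _), Finset.card_univ,
          Fintype.card_fin, hins]
      omega
    -- handshake
    have hhs : Dn + Wn + Un = 2 * (n - 1 + c) := by
      have h0 := G.sum_degrees_eq_twice_card_edges
      rw [hm] at h0
      have h1 : ∑ v ∈ out, G.degree v + ∑ v ∈ insert i Ni, G.degree v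
          = ∑ v : Fin n, G.degree v := Finset.sum_sdiff (Finset.subset_univ _)
      rw [Finset.sum_insert hiNi] at h1
      omega
    -- W ≤ D² + q
    have hWb : Wn ≤ Dn * Dn + qn := by
      have hterm : ∀ k ∈ Ni, G.degree k ≤ Dn + (G.neighborFinset k ∩ out).card := by
        intro k hk
        have hsplit : G.neighborFinset k =
            (G.neighborFinset k ∩ insert i Ni) ∪ (G.neighborFinset k ∩ out) := by
          rw [← Finset.inter_union_distrib_left, hout,
            Finset.union_sdiff_of_subset (Finset.subset_univ _), Finset.inter_univ]
        have h2 : (G.neighborFinset k ∩ insert i Ni).card ≤ Dn := by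
          have hsub : G.neighborFinset k ∩ insert i Ni ⊆ insert i Ni \ {k} := by
            intro x hx
            rw [Finset.mem_inter] at hx
            rw [Finset.mem_sdiff, Finset.mem_singleton]
            refine ⟨hx.2, ?_⟩
            rintro rfl
            exact G.notMem_neighborFinset_self _ hx.1
          have hle := Finset.card_le_card hsub
          have hkmem : k ∈ insert i Ni := Finset.mem_insert_of_mem hk
          have hsing : {k} ⊆ insert i Ni := Finset.singleton_subset_iff.mpr hkmem
          rwa [Finset.card_sdiff_of_subset hsing, hins, Finset.card_singleton] at hle
        calc G.degree k = (G.neighborFinset k).card :=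
              (G.card_neighborFinset_eq_degree k).symm
          _ ≤ (G.neighborFinset k ∩ insert i Ni).card
              + (G.neighborFinset k ∩ out).card := by
              conv_lhs => rw [hsplit]
              exact Finset.card_union_le _ _
          _ ≤ Dn + (G.neighborFinset k ∩ out).card := by omega
      calc Wn ≤ ∑ k ∈ Ni, (Dn + (G.neighborFinset k ∩ out).card) :=
            Finset.sum_le_sum hterm
        _ = Dn * Dn + qn := by
            rw [Finset.sum_add_distrib, Finset.sum_const, hNicard, smul_eq_mul, hqn]
    -- q ≤ U
    have hqU : qn ≤ Un := by
      have hrw : ∀ k, G.neighborFinset k ∩ out = out.filter (fun v => G.Adj k v) := by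
        intro k; ext v
        simp [SimpleGraph.mem_neighborFinset, Finset.mem_filter, and_comm]
      have hq2 : qn = ∑ v ∈ out, (Ni.filter (fun k => G.Adj k v)).card := by
        rw [hqn]
        have e1 : ∀ k ∈ Ni, (G.neighborFinset k ∩ out).card
            = ∑ v ∈ out, if G.Adj k v then 1 else 0 := by
          intro k _
          rw [hrw k, Finset.card_filter]
        rw [Finset.sum_congr rfl e1, Finset.sum_comm]
        apply Finset.sum_congr rfl
        intro v _
        exact (Finset.card_filter _ _).symm
      rw [hq2, hUn]
      apply Finset.sum_le_sum
      intro v _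
      have hsub : Ni.filter (fun k => G.Adj k v) ⊆ G.neighborFinset v := by
        intro k hk
        rw [Finset.mem_filter] at hk
        rw [SimpleGraph.mem_neighborFinset]
        exact hk.2.symm
      calc (Ni.filter (fun k => G.Adj k v)).card ≤ (G.neighborFinset v).card :=
            Finset.card_le_card hsub
        _ = G.degree v := G.card_neighborFinset_eq_degree v
    -- q ≤ D * o
    have hqDo : qn ≤ Dn * o := by
      calc qn ≤ ∑ _k ∈ Ni, o :=
            Finset.sum_le_sum fun k _ =>
              Finset.card_le_card (Finset.inter_subset_right)
        _ = Dn * o := by rw [Finset.sum_const, hNicard, smul_eq_mul]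
    -- o ≤ U
    have hoU : o ≤ Un := by
      calc o = ∑ _v ∈ out, 1 := by rw [Finset.sum_const, smul_eq_mul, mul_one]
        _ ≤ Un := Finset.sum_le_sum fun v _ => hdeg v
    have hWr : (Wn : ℝ) = ∑ k ∈ Ni, (G.degree k : ℝ) := by
      rw [hWn]; push_cast; ring
    rw [← hWr]
    have hDpos : 1 ≤ Dn := by rw [hDn]; exact hdeg i
    clear_value Ni Dn out o Wn Un qn
    obtain ⟨d, hd⟩ : ∃ d, Dn = d + 1 := ⟨Dn - 1, by omega⟩
    have h2 : (d + 1) + Wn + Un = 2 * ((d + 1) + o) + 2 * c := by omega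
    have hKN := keyNat d o Wn Un qn c h2 (hd ▸ hWb) hqU (hd ▸ hqDo) hoU
    -- cast to ℝ
    have hcast : (((d + 1) * (d + 1) + Wn) * ((d + 1) + o) : ℝ) ≤
        2 * (d + 1) * ((d + 1) + o) + (d + o) * ((d + 1) + o) * (d + 1) + 2 * c * (d + 1) := by
      exact_mod_cast hKN
    have hn1 : (n : ℝ) - 1 = (d : ℝ) + 1 + o := by
      have hnn : n = d + 1 + 1 + o := by omega
      rw [hnn]; push_cast; ring
    have hn2 : (n : ℝ) - 2 = (d : ℝ) + o := by linarith
    have hDr : (Dn : ℝ) = (d : ℝ) + 1 := by rw [hd]; push_cast; ring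
    -- conclude real inequality
    rw [hDr]
    rw [← mul_le_mul_iff_of_pos_right hn1pos]
    have hTexp : T * ((d : ℝ) + 1) * ((n : ℝ) - 1)
        = ((n : ℝ) - 2) * ((n : ℝ) - 1) * ((d : ℝ) + 1) + 2 * (c : ℝ) * ((d : ℝ) + 1) := by
      rw [hT]; field_simp
    have hgoal : (((d : ℝ) + 1) * ((d : ℝ) + 1) - 2 * ((d : ℝ) + 1) + (Wn : ℝ)) * ((n : ℝ) - 1)
        ≤ ((n : ℝ) - 2) * ((n : ℝ) - 1) * ((d : ℝ) + 1) + 2 * (c : ℝ) * ((d : ℝ) + 1) := by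
      rw [hn1, hn2]
      push_cast at hcast ⊢
      nlinarith [hcast]
    calc (((d : ℝ) + 1) * ((d : ℝ) + 1) - 2 * ((d : ℝ) + 1) + (Wn : ℝ)) * ((n : ℝ) - 1)
        ≤ ((n : ℝ) - 2) * ((n : ℝ) - 1) * ((d : ℝ) + 1) + 2 * (c : ℝ) * ((d : ℝ) + 1) := hgoal
      _ = T * ((d : ℝ) + 1) * ((n : ℝ) - 1) := hTexp.symm
  -- row-sum bound with weights √(deg)
  have hrow : ∀ i : Fin n,
      ∑ k, ABCMatrix G i k * Real.sqrt (G.degree k) ≤ B * Real.sqrt (G.degree i) := by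
    intro i
    have hdipos : (0 : ℝ) < (G.degree i : ℝ) := by linarith [hdegR i]
    have hsum : ∑ k, ABCMatrix G i k * Real.sqrt (G.degree k)
        = ∑ k ∈ G.neighborFinset i,
            Real.sqrt (((G.degree i : ℝ) + (G.degree k : ℝ) - 2)
              / ((G.degree i : ℝ) * (G.degree k : ℝ))) * Real.sqrt (G.degree k) := by
      rw [G.neighborFinset_eq_filter, Finset.sum_filter]
      apply Finset.sum_congr rfl
      intro k _
      by_cases h : G.Adj i k <;> simp [ABCMatrix, h]
    have hterm : ∀ k ∈ G.neighborFinset i,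
        Real.sqrt (((G.degree i : ℝ) + (G.degree k : ℝ) - 2)
            / ((G.degree i : ℝ) * (G.degree k : ℝ))) * Real.sqrt (G.degree k)
          = Real.sqrt ((G.degree i : ℝ) + (G.degree k : ℝ) - 2) / Real.sqrt (G.degree i) := by
      intro k _
      have hdk : (0 : ℝ) < (G.degree k : ℝ) := by linarith [hdegR k]
      have hnum : (0 : ℝ) ≤ (G.degree i : ℝ) + (G.degree k : ℝ) - 2 := by
        linarith [hdegR i, hdegR k]
      have hql : (0 : ℝ) ≤ ((G.degree i : ℝ) + (G.degree k : ℝ) - 2)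
          / ((G.degree i : ℝ) * (G.degree k : ℝ)) := by positivity
      rw [← Real.sqrt_mul hql]
      rw [show ((G.degree i : ℝ) + (G.degree k : ℝ) - 2)
            / ((G.degree i : ℝ) * (G.degree k : ℝ)) * (G.degree k : ℝ)
          = ((G.degree i : ℝ) + (G.degree k : ℝ) - 2) / (G.degree i : ℝ) by
        field_simp]
      rw [Real.sqrt_div hnum]
    rw [hsum, Finset.sum_congr rfl hterm, ← Finset.sum_div]
    rw [div_le_iff₀ (Real.sqrt_pos.mpr hdipos)]
    have hsq : Real.sqrt (G.degree i) * Real.sqrt (G.degree i) = (G.degree i : ℝ) :=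
      Real.mul_self_sqrt (le_of_lt hdipos)
    rw [mul_assoc, hsq]
    -- Cauchy–Schwarz
    set S := ∑ k ∈ G.neighborFinset i,
      Real.sqrt ((G.degree i : ℝ) + (G.degree k : ℝ) - 2) with hS
    have hS0 : 0 ≤ S := Finset.sum_nonneg fun k _ => Real.sqrt_nonneg _
    have hcs : S ^ 2 ≤ (G.degree i : ℝ) *
        ∑ k ∈ G.neighborFinset i, ((G.degree i : ℝ) + (G.degree k : ℝ) - 2) := by
      have h1 := Finset.sum_mul_sq_le_sq_mul_sq (G.neighborFinset i)
        (fun _ => (1 : ℝ)) (fun k => Real.sqrt ((G.degree i : ℝ) + (G.degree k : ℝ) - 2))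
      simp only [one_mul, one_pow] at h1
      have h2 : ∑ k ∈ G.neighborFinset i,
          Real.sqrt ((G.degree i : ℝ) + (G.degree k : ℝ) - 2) ^ 2
          = ∑ k ∈ G.neighborFinset i, ((G.degree i : ℝ) + (G.degree k : ℝ) - 2) := by
        apply Finset.sum_congr rfl
        intro k _
        exact Real.sq_sqrt (by linarith [hdegR i, hdegR k])
      have h3 : (∑ _k ∈ G.neighborFinset i, (1 : ℝ)) = (G.degree i : ℝ) := by
        rw [Finset.sum_const, G.card_neighborFinset_eq_degree, nsmul_eq_mul, mul_one]
      rw [h2, h3] at h1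
      exact h1
    have hsumdeg : ∑ k ∈ G.neighborFinset i, ((G.degree i : ℝ) + (G.degree k : ℝ) - 2)
        = (G.degree i : ℝ) * (G.degree i : ℝ) - 2 * (G.degree i : ℝ)
          + ∑ k ∈ G.neighborFinset i, (G.degree k : ℝ) := by
      rw [Finset.sum_sub_distrib, Finset.sum_add_distrib, Finset.sum_const, Finset.sum_const,
        G.card_neighborFinset_eq_degree, nsmul_eq_mul, nsmul_eq_mul]
      ring
    have hS2 : S ^ 2 ≤ T * (G.degree i : ℝ) ^ 2 := by
      calc S ^ 2 ≤ (G.degree i : ℝ) *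
            ∑ k ∈ G.neighborFinset i, ((G.degree i : ℝ) + (G.degree k : ℝ) - 2) := hcs
        _ ≤ (G.degree i : ℝ) * (T * (G.degree i : ℝ)) := by
            apply mul_le_mul_of_nonneg_left _ (le_of_lt hdipos)
            rw [hsumdeg]; exact hkey i
        _ = T * (G.degree i : ℝ) ^ 2 := by ring
    have : S ≤ B * (G.degree i : ℝ) := by
      have h1 : S = Real.sqrt (S ^ 2) := (Real.sqrt_sq hS0).symm
      rw [h1]
      calc Real.sqrt (S ^ 2) ≤ Real.sqrt (T * (G.degree i : ℝ) ^ 2) :=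
            Real.sqrt_le_sqrt hS2
        _ = B * (G.degree i : ℝ) := by
            rw [Real.sqrt_mul hT0, Real.sqrt_sq (le_of_lt hdipos), hB]
    exact this
  -- main Rayleigh bound
  have main : ∀ x : Fin n → ℝ, ∑ i, x i ^ 2 = 1 →
      x ⬝ᵥ (ABCMatrix G).mulVec x ≤ B := by
    intro x hx
    set M := ABCMatrix G with hM
    set g : Fin n → ℝ := fun v => Real.sqrt (G.degree v) with hg
    have hgpos : ∀ v, 0 < g v := by
      intro v
      apply Real.sqrt_pos.mpr
      have := hdegR v; linarith
    have hM0 : ∀ i k, 0 ≤ M i k := by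
      intro i k
      rw [hM]
      unfold ABCMatrix
      split
      · exact Real.sqrt_nonneg _
      · exact le_rfl
    have hMsymm : ∀ i k, M i k = M k i := by
      intro i k
      rw [hM]
      unfold ABCMatrix
      by_cases h : G.Adj i k
      · rw [if_pos h, if_pos h.symm]
        congr 1
        ring
      · rw [if_neg h, if_neg (fun hh => h hh.symm)]
    have step1 : x ⬝ᵥ M.mulVec x = ∑ i, ∑ k, M i k * (x i * x k) := by
      have e1 : x ⬝ᵥ M.mulVec x = ∑ i, x i * ∑ k, M i k * x k := rfl
      rw [e1]
      apply Finset.sum_congr rfl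
      intro i _
      rw [Finset.mul_sum]
      apply Finset.sum_congr rfl
      intro k _
      ring
    have step2 : ∑ i, ∑ k, M i k * (x i * x k)
        ≤ ∑ i, ∑ k, M i k * (x i ^ 2 * (g k / (2 * g i)) + x k ^ 2 * (g i / (2 * g k))) := by
      apply Finset.sum_le_sum
      intro i _
      apply Finset.sum_le_sum
      intro k _
      exact mul_le_mul_of_nonneg_left
        (amgm_aux (x i) (x k) (g i) (g k) (hgpos i) (hgpos k)) (hM0 i k)
    have step3 : ∑ i, ∑ k, M i k * (x i ^ 2 * (g k / (2 * g i)) + x k ^ 2 * (g i / (2 * g k)))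
        = ∑ i, (x i ^ 2 / g i) * ∑ k, M i k * g k := by
      have hsplit : ∀ i k, M i k * (x i ^ 2 * (g k / (2 * g i)) + x k ^ 2 * (g i / (2 * g k)))
          = M i k * (x i ^ 2 * (g k / (2 * g i))) + M i k * (x k ^ 2 * (g i / (2 * g k))) := by
        intro i k; ring
      simp only [hsplit, Finset.sum_add_distrib]
      have hswap : ∑ i, ∑ k, M i k * (x k ^ 2 * (g i / (2 * g k)))
          = ∑ i, ∑ k, M i k * (x i ^ 2 * (g k / (2 * g i))) := by
        rw [Finset.sum_comm]
        apply Finset.sum_congr rfl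
        intro i _
        apply Finset.sum_congr rfl
        intro k _
        rw [hMsymm k i]
      rw [hswap, ← two_mul, Finset.mul_sum]
      apply Finset.sum_congr rfl
      intro i _
      rw [Finset.mul_sum, Finset.mul_sum]
      apply Finset.sum_congr rfl
      intro k _
      ring
    have step4 : ∑ i, (x i ^ 2 / g i) * ∑ k, M i k * g k ≤ ∑ i, B * x i ^ 2 := by
      apply Finset.sum_le_sum
      intro i _
      have h1 : (x i ^ 2 / g i) * (∑ k, M i k * g k) ≤ (x i ^ 2 / g i) * (B * g i) := by
        apply mul_le_mul_of_nonneg_left (hrow i)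
        positivity
      calc (x i ^ 2 / g i) * ∑ k, M i k * g k ≤ (x i ^ 2 / g i) * (B * g i) := h1
        _ = B * x i ^ 2 := by
            have hgi : g i ≠ 0 := ne_of_gt (hgpos i)
            rw [show (x i ^ 2 / g i) * (B * g i) = B * x i ^ 2 * (g i / g i) by ring,
              div_self hgi, mul_one]
    calc x ⬝ᵥ M.mulVec x = ∑ i, ∑ k, M i k * (x i * x k) := step1
      _ ≤ ∑ i, ∑ k, M i k * (x i ^ 2 * (g k / (2 * g i)) + x k ^ 2 * (g i / (2 * g k))) := step2
      _ = ∑ i, (x i ^ 2 / g i) * ∑ k, M i k * g k := step3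
      _ ≤ ∑ i, B * x i ^ 2 := step4
      _ = B := by rw [← Finset.mul_sum, hx, mul_one]
  -- conclude
  apply Real.sSup_le
  · rintro r ⟨x, hx, rfl⟩
    exact main x hx
  · exact hB0
end

section
/- For every connected graph G with n ≥ 3 vertices, ρ_ABC(G) ≤ √(2n−4), with equality if and only if G is the complete graph K_n. -/
open scoped Classical
open Finset Matrix

lemma aux_deg_pos {n : ℕ} (hn : 3 ≤ n) (G : SimpleGraph (Fin n)) (hG : G.Connected) (i : Fin n) :
    0 < G.degree i := by
  rw [SimpleGraph.degree_pos_iff_exists_adj]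
  have : 1 < Fintype.card (Fin n) := by simp; omega
  obtain ⟨j, hj⟩ := Fintype.exists_ne_of_one_lt_card this i
  obtain ⟨w⟩ := hG.preconnected i j
  cases w with
  | nil => exact absurd rfl hj
  | cons h p => exact ⟨_, h⟩

lemma aux_sum_eval {n : ℕ} (G : SimpleGraph (Fin n)) (i : Fin n) (K : ℝ) :
    ∑ j, (if G.Adj i j then K else 0) = (G.degree i : ℝ) * K := by
  have : ∑ j, (if G.Adj i j then K else 0) = ∑ j ∈ G.neighborFinset i, K := by
    rw [SimpleGraph.neighborFinset_eq_filter, Finset.sum_filter]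
  rw [this, Finset.sum_const, SimpleGraph.degree, nsmul_eq_mul]

lemma aux_quad_le {n : ℕ} (G : SimpleGraph (Fin n)) (hd : ∀ i, 0 < G.degree i)
    (c : Fin n → Fin n → ℝ) (hcs : ∀ i j, c i j = c j i)
    (hc : ∀ i j, G.Adj i j → Real.sqrt ((G.degree i : ℝ) + (G.degree j : ℝ) - 2) ≤ c i j)
    (x : Fin n → ℝ) :
    x ⬝ᵥ (ABCMatrix G).mulVec x ≤
      ∑ i, ∑ j, (if G.Adj i j then c i j * (x i ^ 2 / (G.degree i : ℝ)) else 0) := by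
  have hd' : ∀ i, (0:ℝ) < (G.degree i : ℝ) := fun i => by exact_mod_cast hd i
  have hd1 : ∀ i, (1:ℝ) ≤ (G.degree i : ℝ) := fun i => by exact_mod_cast hd i
  have key : x ⬝ᵥ (ABCMatrix G).mulVec x =
      ∑ i, ∑ j, x i * (ABCMatrix G i j * x j) := by
    simp [dotProduct, Matrix.mulVec, Finset.mul_sum]
  rw [key]
  have step1 : ∑ i, ∑ j, x i * (ABCMatrix G i j * x j) ≤
      ∑ i, ∑ j, (if G.Adj i j then
        c i j * ((x i ^ 2 / (G.degree i : ℝ) + x j ^ 2 / (G.degree j : ℝ)) / 2) else 0) := by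
    refine Finset.sum_le_sum fun i _ => Finset.sum_le_sum fun j _ => ?_
    by_cases h : G.Adj i j
    · simp only [ABCMatrix, h, if_true]
      set di := (G.degree i : ℝ)
      set dj := (G.degree j : ℝ)
      have hnum : (0:ℝ) ≤ di + dj - 2 := by linarith [hd1 i, hd1 j]
      have hsq : Real.sqrt ((di + dj - 2) / (di * dj)) =
          Real.sqrt (di + dj - 2) * (1 / Real.sqrt di * (1 / Real.sqrt dj)) := by
        rw [Real.sqrt_div hnum, Real.sqrt_mul (le_of_lt (hd' i))]
        ring
      have habs : x i * (Real.sqrt ((di + dj - 2) / (di * dj)) * x j) ≤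
          Real.sqrt ((di + dj - 2) / (di * dj)) * (|x i| * |x j|) := by
        calc x i * (Real.sqrt ((di + dj - 2) / (di * dj)) * x j) ≤
            |x i * (Real.sqrt ((di + dj - 2) / (di * dj)) * x j)| := le_abs_self _
          _ = Real.sqrt ((di + dj - 2) / (di * dj)) * (|x i| * |x j|) := by
              rw [abs_mul, abs_mul, abs_of_nonneg (Real.sqrt_nonneg _)]; ring
      refine le_trans habs ?_
      rw [hsq]
      have hamgm : |x i| / Real.sqrt di * (|x j| / Real.sqrt dj) ≤
          (x i ^ 2 / di + x j ^ 2 / dj) / 2 := by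
        have e1 : (|x i| / Real.sqrt di) ^ 2 = x i ^ 2 / di := by
          rw [div_pow, sq_abs, Real.sq_sqrt (le_of_lt (hd' i))]
        have e2 : (|x j| / Real.sqrt dj) ^ 2 = x j ^ 2 / dj := by
          rw [div_pow, sq_abs, Real.sq_sqrt (le_of_lt (hd' j))]
        nlinarith [sq_nonneg (|x i| / Real.sqrt di - |x j| / Real.sqrt dj)]
      have hcij : 0 ≤ (x i ^ 2 / di + x j ^ 2 / dj) / 2 := by positivity
      calc Real.sqrt (di + dj - 2) * (1 / Real.sqrt di * (1 / Real.sqrt dj)) * (|x i| * |x j|)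
          = Real.sqrt (di + dj - 2) * (|x i| / Real.sqrt di * (|x j| / Real.sqrt dj)) := by ring
        _ ≤ Real.sqrt (di + dj - 2) * ((x i ^ 2 / di + x j ^ 2 / dj) / 2) :=
            mul_le_mul_of_nonneg_left hamgm (Real.sqrt_nonneg _)
        _ ≤ c i j * ((x i ^ 2 / di + x j ^ 2 / dj) / 2) :=
            mul_le_mul_of_nonneg_right (hc i j h) hcij
    · simp [ABCMatrix, h]
  refine le_trans step1 (le_of_eq ?_)
  have split : ∀ i j, (if G.Adj i j then
        c i j * ((x i ^ 2 / (G.degree i : ℝ) + x j ^ 2 / (G.degree j : ℝ)) / 2) else 0) =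
      (if G.Adj i j then c i j * (x i ^ 2 / (G.degree i : ℝ)) else 0) / 2 +
      (if G.Adj i j then c i j * (x j ^ 2 / (G.degree j : ℝ)) else 0) / 2 := by
    intro i j; by_cases h : G.Adj i j <;> simp [h] <;> ring
  simp only [split, Finset.sum_add_distrib, ← Finset.sum_div]
  have swap : ∑ i, ∑ j, (if G.Adj i j then c i j * (x j ^ 2 / (G.degree j : ℝ)) else 0) =
      ∑ i, ∑ j, (if G.Adj i j then c i j * (x i ^ 2 / (G.degree i : ℝ)) else 0) := by
    rw [Finset.sum_comm]
    refine Finset.sum_congr rfl fun i _ => Finset.sum_congr rfl fun j _ => ?_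
    by_cases h : G.Adj i j
    · simp [h, h.symm, hcs i j]
    · rw [if_neg h, if_neg (fun h' => h h'.symm)]
  rw [swap]; ring

theorem stmt8 {n : ℕ} (hn : 3 ≤ n) (G : SimpleGraph (Fin n)) (hG : G.Connected) :
    rhoABC G ≤ Real.sqrt (2 * (n : ℝ) - 4) ∧
      (rhoABC G = Real.sqrt (2 * (n : ℝ) - 4) ↔ G = ⊤) := by
  have hn3 : (3:ℝ) ≤ (n:ℝ) := by exact_mod_cast hn
  set B := Real.sqrt (2 * (n : ℝ) - 4) with hBdef
  have hB0 : 0 ≤ B := Real.sqrt_nonneg _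
  have hdpos : ∀ i, 0 < G.degree i := aux_deg_pos hn G hG
  have hd' : ∀ i, (0:ℝ) < (G.degree i : ℝ) := fun i => by exact_mod_cast hdpos i
  have hdegle : ∀ i, (G.degree i : ℝ) ≤ (n:ℝ) - 1 := by
    intro i
    have h1 : G.degree i + 1 ≤ n := by
      have := G.degree_lt_card_verts i; simp at this; omega
    have h2 : ((G.degree i : ℝ) + 1) ≤ (n:ℝ) := by exact_mod_cast h1
    linarith
  -- weak bound
  have weak : ∀ r ∈ {r : ℝ | ∃ x : Fin n → ℝ,
      ∑ i, x i ^ 2 = 1 ∧ r = x ⬝ᵥ (ABCMatrix G).mulVec x}, r ≤ B := by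
    rintro r ⟨x, hx, rfl⟩
    have h := aux_quad_le G hdpos (fun _ _ => B) (fun _ _ => rfl)
      (fun i j hij => Real.sqrt_le_sqrt (by linarith [hdegle i, hdegle j])) x
    refine h.trans (le_of_eq ?_)
    have : ∀ i : Fin n, ∑ j, (if G.Adj i j then B * (x i ^ 2 / (G.degree i : ℝ)) else 0)
        = B * x i ^ 2 := by
      intro i
      rw [aux_sum_eval]
      field_simp
      rw [mul_assoc, mul_div_cancel_left₀ _ (ne_of_gt (hd' i))]
    rw [Finset.sum_congr rfl (fun i _ => this i), ← Finset.mul_sum, hx, mul_one]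
  have hrho_le : rhoABC G ≤ B := Real.sSup_le weak hB0
  refine ⟨hrho_le, ?_, ?_⟩
  · -- forward: equality implies complete
    intro heq
    by_contra hne
    -- there is a non-adjacent pair
    have hex : ∃ u v : Fin n, u ≠ v ∧ ¬ G.Adj u v := by
      by_contra hno
      push_neg at hno
      apply hne
      ext a b
      simp only [SimpleGraph.top_adj]
      exact ⟨fun h => G.ne_of_adj h, fun h => hno a b h⟩
    obtain ⟨u, v, huv, hnadj⟩ := hex
    -- u is not "full"
    have hufull : G.degree u ≤ n - 2 := by
      have hsub : G.neighborFinset u ⊆ (Finset.univ \ {u, v}) := by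
        intro j hj
        rw [SimpleGraph.mem_neighborFinset] at hj
        simp only [Finset.mem_sdiff, Finset.mem_univ, true_and, Finset.mem_insert,
          Finset.mem_singleton]
        push_neg
        exact ⟨fun h => G.ne_of_adj hj (h ▸ rfl), fun h => hnadj (h ▸ hj)⟩
      have hcard : (Finset.univ \ ({u, v} : Finset (Fin n))).card = n - 2 := by
        rw [Finset.card_sdiff_of_subset (Finset.subset_univ _), Finset.card_univ]
        simp [Finset.card_pair huv]
      calc G.degree u ≤ (Finset.univ \ ({u, v} : Finset (Fin n))).card :=
            Finset.card_le_card hsub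
        _ = n - 2 := hcard
    have hunotfull : ¬ (G.degree u = n - 1) := by omega
    set s := Real.sqrt (2 * (n:ℝ) - 5) with hsdef
    have hsB : s < B := Real.sqrt_lt_sqrt (by linarith) (by linarith)
    have hs0 : 0 ≤ s := Real.sqrt_nonneg _
    set q : ℝ := ((n:ℝ) - 2) / ((n:ℝ) - 1) with hqdef
    have hq0 : 0 ≤ q := by
      rw [hqdef]; apply div_nonneg <;> linarith
    have hq1 : q < 1 := by
      rw [hqdef, div_lt_one (by linarith)]; linarith
    -- strict bound
    have strict : ∀ r ∈ {r : ℝ | ∃ x : Fin n → ℝ,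
        ∑ i, x i ^ 2 = 1 ∧ r = x ⬝ᵥ (ABCMatrix G).mulVec x}, r ≤ s + (B - s) * q := by
      rintro r ⟨x, hx, rfl⟩
      set c : Fin n → Fin n → ℝ := fun i j =>
        if G.degree i = n - 1 ∧ G.degree j = n - 1 then B else s with hcdef
      have hcs : ∀ i j, c i j = c j i := by
        intro i j; simp only [hcdef, and_comm]
      have hc : ∀ i j, G.Adj i j →
          Real.sqrt ((G.degree i : ℝ) + (G.degree j : ℝ) - 2) ≤ c i j := by
        intro i j hij
        simp only [hcdef]
        by_cases hful : G.degree i = n - 1 ∧ G.degree j = n - 1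
        · rw [if_pos hful]
          exact Real.sqrt_le_sqrt (by linarith [hdegle i, hdegle j])
        · rw [if_neg hful]
          apply Real.sqrt_le_sqrt
          rcases not_and_or.1 hful with hnf | hnf
          · have h1 : G.degree i ≤ n - 2 := by
              have := G.degree_lt_card_verts i; simp at this; omega
            have h1' : (G.degree i : ℝ) ≤ (n:ℝ) - 2 := by
              have : (G.degree i : ℝ) ≤ ((n - 2 : ℕ) : ℝ) := by exact_mod_cast h1
              have : ((n - 2 : ℕ) : ℝ) = (n:ℝ) - 2 := by
                have : (2:ℕ) ≤ n := by omega
                push_cast [Nat.cast_sub this]; ring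
              linarith [show (G.degree i : ℝ) ≤ ((n - 2 : ℕ) : ℝ) by exact_mod_cast h1]
            linarith [hdegle j]
          · have h1 : G.degree j ≤ n - 2 := by
              have := G.degree_lt_card_verts j; simp at this; omega
            have h1' : (G.degree j : ℝ) ≤ (n:ℝ) - 2 := by
              have h2 : (G.degree j : ℝ) ≤ ((n - 2 : ℕ) : ℝ) := by exact_mod_cast h1
              have h3 : ((n - 2 : ℕ) : ℝ) = (n:ℝ) - 2 := by
                have : (2:ℕ) ≤ n := by omega
                push_cast [Nat.cast_sub this]; ring
              linarith
            linarith [hdegle i]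
      have h := aux_quad_le G hdpos c hcs hc x
      refine h.trans ?_
      -- split the weight
      have hsplit : ∀ i j : Fin n,
          (if G.Adj i j then c i j * (x i ^ 2 / (G.degree i : ℝ)) else 0) =
          (if G.Adj i j then s * (x i ^ 2 / (G.degree i : ℝ)) else 0) +
          (if G.Adj i j ∧ G.degree i = n - 1 ∧ G.degree j = n - 1 then
            (B - s) * (x i ^ 2 / (G.degree i : ℝ)) else 0) := by
        intro i j
        by_cases h1 : G.Adj i j
        · by_cases h2 : G.degree i = n - 1 ∧ G.degree j = n - 1
          · rw [if_pos h1, if_pos h1, if_pos ⟨h1, h2⟩]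
            simp only [hcdef, if_pos h2]; ring
          · rw [if_pos h1, if_pos h1, if_neg (fun hh => h2 hh.2)]
            simp only [hcdef, if_neg h2]; ring
        · rw [if_neg h1, if_neg h1, if_neg (fun hh => h1 hh.1)]; ring
      simp only [hsplit, Finset.sum_add_distrib]
      have part1 : ∑ i, ∑ j, (if G.Adj i j then s * (x i ^ 2 / (G.degree i : ℝ)) else 0) = s := by
        have : ∀ i : Fin n, ∑ j, (if G.Adj i j then s * (x i ^ 2 / (G.degree i : ℝ)) else 0)
            = s * x i ^ 2 := by
          intro i; rw [aux_sum_eval]; field_simp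
          rw [mul_assoc, mul_div_cancel_left₀ _ (ne_of_gt (hd' i))]
        rw [Finset.sum_congr rfl (fun i _ => this i), ← Finset.mul_sum, hx, mul_one]
      have part2 : ∑ i, ∑ j, (if G.Adj i j ∧ G.degree i = n - 1 ∧ G.degree j = n - 1 then
          (B - s) * (x i ^ 2 / (G.degree i : ℝ)) else 0) ≤ (B - s) * q := by
        have hBs : 0 ≤ B - s := by linarith
        have inner : ∀ i : Fin n,
            ∑ j, (if G.Adj i j ∧ G.degree i = n - 1 ∧ G.degree j = n - 1 then
              (B - s) * (x i ^ 2 / (G.degree i : ℝ)) else 0) ≤ (B - s) * q * x i ^ 2 := by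
          intro i
          by_cases hfi : G.degree i = n - 1
          · have hiu : i ≠ u := fun h => hunotfull (h ▸ hfi)
            have hdi : (G.degree i : ℝ) = (n:ℝ) - 1 := by
              rw [hfi]
              have : (1:ℕ) ≤ n := by omega
              push_cast [Nat.cast_sub this]; ring
            set C := (B - s) * (x i ^ 2 / (G.degree i : ℝ)) with hCdef
            have hC0 : 0 ≤ C :=
              mul_nonneg hBs (div_nonneg (sq_nonneg _) (le_of_lt (hd' i)))
            have heval : ∑ j, (if G.Adj i j ∧ G.degree i = n - 1 ∧ G.degree j = n - 1 then
                C else 0) = ((Finset.univ.filter (fun j => G.Adj i j ∧ G.degree i = n - 1 ∧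
                  G.degree j = n - 1)).card : ℝ) * C := by
              rw [Finset.sum_ite, Finset.sum_const, Finset.sum_const_zero, add_zero,
                nsmul_eq_mul]
            rw [heval]
            have hcardle : (Finset.univ.filter (fun j => G.Adj i j ∧ G.degree i = n - 1 ∧
                G.degree j = n - 1)).card ≤ n - 2 := by
              have hsub : Finset.univ.filter (fun j => G.Adj i j ∧ G.degree i = n - 1 ∧
                  G.degree j = n - 1) ⊆ Finset.univ \ {i, u} := by
                intro j hj
                rw [Finset.mem_filter] at hj
                obtain ⟨-, hadj, -, hfj⟩ := hj
                simp only [Finset.mem_sdiff, Finset.mem_univ, true_and, Finset.mem_insert,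
                  Finset.mem_singleton]
                push_neg
                exact ⟨fun h => G.ne_of_adj hadj h.symm, fun h => hunotfull (h ▸ hfj)⟩
              have hcard : (Finset.univ \ ({i, u} : Finset (Fin n))).card = n - 2 := by
                rw [Finset.card_sdiff_of_subset (Finset.subset_univ _), Finset.card_univ]
                simp [Finset.card_pair hiu]
              calc _ ≤ (Finset.univ \ ({i, u} : Finset (Fin n))).card :=
                    Finset.card_le_card hsub
                _ = n - 2 := hcard
            have hcardle' : ((Finset.univ.filter (fun j => G.Adj i j ∧ G.degree i = n - 1 ∧
                G.degree j = n - 1)).card : ℝ) ≤ (n:ℝ) - 2 := by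
              have h2 : ((Finset.univ.filter (fun j => G.Adj i j ∧ G.degree i = n - 1 ∧
                  G.degree j = n - 1)).card : ℝ) ≤ ((n - 2 : ℕ) : ℝ) := by
                exact_mod_cast hcardle
              have h3 : ((n - 2 : ℕ) : ℝ) = (n:ℝ) - 2 := by
                have : (2:ℕ) ≤ n := by omega
                push_cast [Nat.cast_sub this]; ring
              linarith
            calc ((Finset.univ.filter (fun j => G.Adj i j ∧ G.degree i = n - 1 ∧
                G.degree j = n - 1)).card : ℝ) * C ≤ ((n:ℝ) - 2) * C := by
                  apply mul_le_mul_of_nonneg_right hcardle' hC0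
              _ = (B - s) * q * x i ^ 2 := by
                  have hne1 : (n:ℝ) - 1 ≠ 0 := by linarith
                  rw [hCdef, hdi, hqdef]
                  field_simp
          · have : ∀ j : Fin n, (if G.Adj i j ∧ G.degree i = n - 1 ∧ G.degree j = n - 1 then
                (B - s) * (x i ^ 2 / (G.degree i : ℝ)) else 0) = 0 := by
              intro j
              rw [if_neg (fun hh => hfi hh.2.1)]
            rw [Finset.sum_congr rfl (fun j _ => this j), Finset.sum_const, smul_zero]
            exact mul_nonneg (mul_nonneg hBs hq0) (sq_nonneg _)
        calc ∑ i, ∑ j, (if G.Adj i j ∧ G.degree i = n - 1 ∧ G.degree j = n - 1 then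
            (B - s) * (x i ^ 2 / (G.degree i : ℝ)) else 0)
            ≤ ∑ i, (B - s) * q * x i ^ 2 := Finset.sum_le_sum fun i _ => inner i
          _ = (B - s) * q := by rw [← Finset.mul_sum, hx, mul_one]
      linarith
    have hlt : rhoABC G < B := by
      have h1 : rhoABC G ≤ s + (B - s) * q := Real.sSup_le strict (add_nonneg hs0 (mul_nonneg (by linarith) hq0))
      have h2 : s + (B - s) * q < B := by nlinarith
      linarith
    linarith [heq ▸ hlt]
  · -- backward: complete implies equality
    intro htop
    have hadjall : ∀ i j : Fin n, i ≠ j → G.Adj i j := by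
      intro i j hij; rw [htop]; exact hij
    have hn1 : (n:ℝ) - 1 ≠ 0 := by linarith
    have hnpos : (0:ℝ) < (n:ℝ) := by linarith
    have hdegn : ∀ i : Fin n, G.degree i = n - 1 := by
      intro i
      rw [SimpleGraph.degree, SimpleGraph.neighborFinset_eq_filter]
      have heq : Finset.univ.filter (G.Adj i) = Finset.univ.erase i := by
        ext j
        simp only [Finset.mem_filter, Finset.mem_univ, true_and, Finset.mem_erase, and_true]
        exact ⟨fun h => (G.ne_of_adj h).symm, fun h => hadjall i j (Ne.symm h)⟩
      rw [heq, Finset.card_erase_of_mem (Finset.mem_univ i), Finset.card_univ, Fintype.card_fin]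
    have hdeg : ∀ i : Fin n, (G.degree i : ℝ) = (n:ℝ) - 1 := by
      intro i
      rw [hdegn i]
      have h1 : (1:ℕ) ≤ n := by omega
      push_cast [Nat.cast_sub h1]
      ring
    -- the witness vector
    set x : Fin n → ℝ := fun _ => (Real.sqrt (n:ℝ))⁻¹ with hxdef
    have hsn : (0:ℝ) < Real.sqrt (n:ℝ) := Real.sqrt_pos.2 hnpos
    have hxsq : ∀ i : Fin n, x i ^ 2 = ((n:ℝ))⁻¹ := by
      intro i
      rw [hxdef]
      rw [inv_pow, Real.sq_sqrt (le_of_lt hnpos)]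
    have hxsum : ∑ i, x i ^ 2 = 1 := by
      rw [Finset.sum_congr rfl (fun i _ => hxsq i), Finset.sum_const, Finset.card_univ,
        Fintype.card_fin, nsmul_eq_mul]
      field_simp
    -- entry value
    have hM : ∀ i j : Fin n, i ≠ j → ABCMatrix G i j = B / ((n:ℝ) - 1) := by
      intro i j hij
      simp only [ABCMatrix, if_pos (hadjall i j hij), hdeg]
      rw [show ((n:ℝ) - 1) + ((n:ℝ) - 1) - 2 = 2 * (n:ℝ) - 4 by ring]
      rw [Real.sqrt_div (by linarith), Real.sqrt_mul_self (by linarith)]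
    have hMdiag : ∀ i : Fin n, ABCMatrix G i i = 0 := by
      intro i; simp [ABCMatrix]
    -- compute the quadratic form
    have hval : x ⬝ᵥ (ABCMatrix G).mulVec x = B := by
      have expand : x ⬝ᵥ (ABCMatrix G).mulVec x =
          ∑ i, ∑ j, x i * (ABCMatrix G i j * x j) := by
        simp [dotProduct, Matrix.mulVec, Finset.mul_sum]
      rw [expand]
      set K := (Real.sqrt (n:ℝ))⁻¹ * (B / ((n:ℝ) - 1) * (Real.sqrt (n:ℝ))⁻¹) with hKdef
      have hterm : ∀ i j : Fin n,
          x i * (ABCMatrix G i j * x j) = if i = j then 0 else K := by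
        intro i j
        by_cases h : i = j
        · subst h; rw [hMdiag, if_pos rfl]; ring
        · rw [hM i j h, if_neg h]
      have hinner : ∀ i : Fin n, ∑ j, (if i = j then 0 else K) = ((n:ℝ) - 1) * K := by
        intro i
        have : ∑ j, (if i = j then 0 else K) = ∑ j : Fin n, (K - if i = j then K else 0) := by
          refine Finset.sum_congr rfl fun j _ => ?_
          by_cases h : i = j <;> simp [h]
        rw [this, Finset.sum_sub_distrib, Finset.sum_const, Finset.card_univ, Fintype.card_fin,
          Finset.sum_ite_eq, if_pos (Finset.mem_univ i), nsmul_eq_mul]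
        ring
      have htot : ∑ i, ∑ j, x i * (ABCMatrix G i j * x j) =
          ∑ i : Fin n, ((n:ℝ) - 1) * K := by
        refine Finset.sum_congr rfl fun i _ => ?_
        rw [Finset.sum_congr rfl (fun j _ => hterm i j), hinner i]
      rw [htot, Finset.sum_const, Finset.card_univ, Fintype.card_fin, nsmul_eq_mul]
      have hss : (Real.sqrt (n:ℝ))⁻¹ * (Real.sqrt (n:ℝ))⁻¹ = ((n:ℝ))⁻¹ := by
        rw [← mul_inv, Real.mul_self_sqrt (le_of_lt hnpos)]
      have hK : K = B / ((n:ℝ) - 1) * ((n:ℝ))⁻¹ := by rw [hKdef, ← hss]; ring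
      rw [hK]
      field_simp
    -- membership and sup
    have hmem : B ∈ {r : ℝ | ∃ y : Fin n → ℝ,
        ∑ i, y i ^ 2 = 1 ∧ r = y ⬝ᵥ (ABCMatrix G).mulVec y} :=
      ⟨x, hxsum, hval.symm⟩
    have hbdd : BddAbove {r : ℝ | ∃ y : Fin n → ℝ,
        ∑ i, y i ^ 2 = 1 ∧ r = y ⬝ᵥ (ABCMatrix G).mulVec y} :=
      ⟨B, weak⟩
    exact le_antisymm hrho_le (le_csSup hbdd hmem)
end

section
/- Let n ≥ 4 and let S_{n−3,1} be the double star obtained from an edge v_1 v_2 by attaching n−3 pendant vertices to v_1 and one pendant vertex to v_2. Then ρ_ABC(S_{n−3,1}) > √(n − 3.5). -/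
open scoped Classical
open Finset Matrix

noncomputable def doubleStar (n : ℕ) : SimpleGraph (Fin n) :=
  SimpleGraph.fromRel (fun i j => (i.val = 0 ∧ j.val ≠ 2) ∨ (i.val = 1 ∧ j.val = 2))


lemma ds_adj {n : ℕ} {i j : Fin n} : (doubleStar n).Adj i j ↔ i ≠ j ∧
    ((i.val = 0 ∧ j.val ≠ 2) ∨ (i.val = 1 ∧ j.val = 2) ∨ (j.val = 0 ∧ i.val ≠ 2) ∨ (j.val = 1 ∧ i.val = 2)) := by
  simp only [doubleStar, SimpleGraph.fromRel_adj]
  tauto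

lemma sum_split {n : ℕ} (hn : 4 ≤ n) (f : Fin n → ℝ) (c : ℝ)
    (hc : ∀ j : Fin n, 3 ≤ j.val → f j = c) :
    ∑ j, f j = f ⟨0, by omega⟩ + f ⟨1, by omega⟩ + f ⟨2, by omega⟩ + ((n : ℝ) - 3) * c := by
  rw [← Finset.sum_filter_add_sum_filter_not univ (fun j => j.val < 3) f]
  have h1 : (univ : Finset (Fin n)).filter (fun j => j.val < 3) =
      {⟨0, by omega⟩, ⟨1, by omega⟩, ⟨2, by omega⟩} := by
    ext j; simp [Fin.ext_iff]; omega
  have h2 : ∀ j ∈ (univ : Finset (Fin n)).filter (fun j => ¬ j.val < 3), f j = c := by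
    intro j hj; simp at hj; exact hc j (by omega)
  rw [Finset.sum_congr rfl h2, Finset.sum_const, h1]
  have h3 : ((univ : Finset (Fin n)).filter (fun j => ¬ j.val < 3)).card = n - 3 := by
    have := Finset.card_filter_add_card_filter_not (s := (univ : Finset (Fin n)))
      (p := fun j => j.val < 3)
    rw [h1] at this
    have hc3 : ({⟨0, by omega⟩, ⟨1, by omega⟩, ⟨2, by omega⟩} : Finset (Fin n)).card = 3 := by
      rw [Finset.card_insert_of_notMem (by simp [Fin.ext_iff]),
        Finset.card_insert_of_notMem (by simp [Fin.ext_iff]), Finset.card_singleton]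
    simp [hc3, Finset.card_univ] at this
    simp only [not_lt]
    omega
  rw [h3, Finset.sum_insert (by simp [Fin.ext_iff]), Finset.sum_insert (by simp [Fin.ext_iff]),
    Finset.sum_singleton, nsmul_eq_mul]
  have : ((n - 3 : ℕ) : ℝ) = (n : ℝ) - 3 := by
    have : (3:ℕ) ≤ n := by omega
    push_cast [this]; ring
  rw [this]; ring

lemma deg0 {n : ℕ} (hn : 4 ≤ n) : (doubleStar n).degree ⟨0, by omega⟩ = n - 2 := by
  rw [← SimpleGraph.card_neighborFinset_eq_degree, SimpleGraph.neighborFinset_eq_filter]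
  have h : Finset.filter ((doubleStar n).Adj ⟨0, by omega⟩) univ =
      univ \ {(⟨0, by omega⟩ : Fin n), ⟨2, by omega⟩} := by
    ext j; simp [ds_adj, Fin.ext_iff]; omega
  rw [h, Finset.card_sdiff_of_subset (by simp)]
  rw [Finset.card_insert_of_notMem (by simp [Fin.ext_iff]), Finset.card_singleton]
  simp

lemma deg1 {n : ℕ} (hn : 4 ≤ n) : (doubleStar n).degree ⟨1, by omega⟩ = 2 := by
  rw [← SimpleGraph.card_neighborFinset_eq_degree, SimpleGraph.neighborFinset_eq_filter]
  have h : Finset.filter ((doubleStar n).Adj ⟨1, by omega⟩) univ =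
      {(⟨0, by omega⟩ : Fin n), ⟨2, by omega⟩} := by
    ext j; simp [ds_adj, Fin.ext_iff]; omega
  rw [h, Finset.card_insert_of_notMem (by simp [Fin.ext_iff]), Finset.card_singleton]

lemma deg2 {n : ℕ} (hn : 4 ≤ n) : (doubleStar n).degree ⟨2, by omega⟩ = 1 := by
  rw [← SimpleGraph.card_neighborFinset_eq_degree, SimpleGraph.neighborFinset_eq_filter]
  have h : Finset.filter ((doubleStar n).Adj ⟨2, by omega⟩) univ =
      {(⟨1, by omega⟩ : Fin n)} := by
    ext j; simp [ds_adj, Fin.ext_iff]; omega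
  rw [h, Finset.card_singleton]

lemma degj {n : ℕ} (hn : 4 ≤ n) (j : Fin n) (hj : 3 ≤ j.val) : (doubleStar n).degree j = 1 := by
  rw [← SimpleGraph.card_neighborFinset_eq_degree, SimpleGraph.neighborFinset_eq_filter]
  have h : Finset.filter ((doubleStar n).Adj j) univ = {(⟨0, by omega⟩ : Fin n)} := by
    ext k; simp [ds_adj, Fin.ext_iff]; omega
  rw [h, Finset.card_singleton]


section entries
variable {n : ℕ} (hn : 4 ≤ n)

lemma castn2 (hn : 4 ≤ n) : ((n - 2 : ℕ) : ℝ) = (n : ℝ) - 2 := by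
  have : (2:ℕ) ≤ n := by omega
  push_cast [this]; ring

lemma nr2pos (hn : 4 ≤ n) : (0:ℝ) < (n : ℝ) - 2 := by
  have : (4:ℝ) ≤ (n:ℝ) := by exact_mod_cast hn
  linarith

lemma A01 : ABCMatrix (doubleStar n) ⟨0, by omega⟩ ⟨1, by omega⟩ = Real.sqrt (1/2) := by
  have hadj : (doubleStar n).Adj ⟨0, by omega⟩ ⟨1, by omega⟩ := by
    rw [ds_adj]; refine ⟨by simp [Fin.ext_iff], Or.inl ⟨rfl, by simp⟩⟩
  rw [ABCMatrix]; rw [if_pos hadj, deg0 hn, deg1 hn, castn2 hn]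
  congr 1
  have := nr2pos hn
  field_simp; push_cast; ring

lemma A0j (j : Fin n) (hj : 3 ≤ j.val) :
    ABCMatrix (doubleStar n) ⟨0, by omega⟩ j = Real.sqrt (((n:ℝ)-3)/((n:ℝ)-2)) := by
  have hadj : (doubleStar n).Adj ⟨0, by omega⟩ j := by
    rw [ds_adj]
    refine ⟨fun h => ?_, Or.inl ⟨rfl, by omega⟩⟩
    rw [← h] at hj; simp at hj
  rw [ABCMatrix]; rw [if_pos hadj, deg0 hn, degj hn j hj, castn2 hn]
  congr 1
  push_cast
  ring

lemma A12 : ABCMatrix (doubleStar n) ⟨1, by omega⟩ ⟨2, by omega⟩ = Real.sqrt (1/2) := by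
  have hadj : (doubleStar n).Adj ⟨1, by omega⟩ ⟨2, by omega⟩ := by
    rw [ds_adj]; exact ⟨by simp [Fin.ext_iff], Or.inr (Or.inl ⟨rfl, rfl⟩)⟩
  rw [ABCMatrix]; rw [if_pos hadj, deg1 hn, deg2 hn]
  norm_num

lemma Asymm (i j : Fin n) : ABCMatrix (doubleStar n) i j = ABCMatrix (doubleStar n) j i := by
  rw [ABCMatrix, ABCMatrix]
  by_cases h : (doubleStar n).Adj i j
  · rw [if_pos h, if_pos h.symm]; ring_nf
  · rw [if_neg h, if_neg (fun h' => h h'.symm)]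

lemma Ananj (i j : Fin n) (h : ¬ (doubleStar n).Adj i j) : ABCMatrix (doubleStar n) i j = 0 := by
  rw [ABCMatrix, if_neg h]

end entries

noncomputable def md (n : ℕ) : ℝ := ((n:ℝ)-3)^2/((n:ℝ)-2)
noncomputable def mu (n : ℕ) : ℝ := Real.sqrt (md n + 1/2)
noncomputable def sq2 : ℝ := Real.sqrt (1/2)
noncomputable def wd (n : ℕ) : ℝ := Real.sqrt (((n:ℝ)-3)/((n:ℝ)-2))

noncomputable def tv (n : ℕ) : Fin n → ℝ := fun i =>
  if i.val = 0 then md n else if i.val = 1 then sq2 * mu n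
  else if i.val = 2 then 1/2 else wd n * md n / mu n

section rows
variable {n : ℕ}

lemma nr3pos (hn : 4 ≤ n) : (0:ℝ) < (n : ℝ) - 3 := by
  have : (4:ℝ) ≤ (n:ℝ) := by exact_mod_cast hn
  linarith

lemma mdpos (hn : 4 ≤ n) : 0 < md n := by
  have h2 := nr2pos hn; have h3 := nr3pos hn
  rw [md]; positivity

lemma mupos (hn : 4 ≤ n) : 0 < mu n := Real.sqrt_pos.2 (by have := mdpos hn; linarith)

lemma musq (hn : 4 ≤ n) : mu n ^ 2 = md n + 1/2 :=
  Real.sq_sqrt (by have := mdpos hn; linarith)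

lemma sq2sq : sq2 * sq2 = 1/2 := Real.mul_self_sqrt (by norm_num)

lemma wdsq (hn : 4 ≤ n) : ((n:ℝ)-3) * (wd n * wd n) = md n := by
  rw [wd, Real.mul_self_sqrt (by have := nr2pos hn; have := nr3pos hn; positivity), md]
  have := nr2pos hn
  field_simp

lemma tv0 (hn : 4 ≤ n) : tv n ⟨0, by omega⟩ = md n := by simp [tv]
lemma tv1 (hn : 4 ≤ n) : tv n ⟨1, by omega⟩ = sq2 * mu n := by simp [tv]
lemma tv2 (hn : 4 ≤ n) : tv n ⟨2, by omega⟩ = 1/2 := by simp [tv]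
lemma tvj (j : Fin n) (hj : 3 ≤ j.val) : tv n j = wd n * md n / mu n := by
  rw [tv]
  rw [if_neg (by omega), if_neg (by omega), if_neg (by omega)]

lemma row0 (hn : 4 ≤ n) : (ABCMatrix (doubleStar n)).mulVec (tv n) ⟨0, by omega⟩ =
    mu n / 2 + md n ^ 2 / mu n := by
  rw [Matrix.mulVec, dotProduct]
  rw [sum_split hn _ (wd n * (wd n * md n / mu n)) (fun j hj => by
    rw [A0j hn j hj, tvj j hj, wd])]
  rw [A01 hn, tv1 hn, Ananj _ _ (by rw [ds_adj]; simp [Fin.ext_iff]),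
      Ananj _ _ (by rw [ds_adj]; simp [Fin.ext_iff])]
  rw [← sq2]
  have h1 : sq2 * (sq2 * mu n) = mu n / 2 := by
    rw [← mul_assoc, sq2sq]; ring
  have h2 : ((n:ℝ) - 3) * (wd n * (wd n * md n / mu n)) = md n ^2 / mu n := by
    have hμ := (mupos hn).ne'
    field_simp
    linear_combination (md n) * wdsq hn
  rw [h1, h2]; ring

lemma nadj1j {n : ℕ} (j : Fin n) (hj : 3 ≤ j.val) (h1 : (1:ℕ) < n) :
    ¬ (doubleStar n).Adj ⟨1, h1⟩ j := by
  rw [ds_adj]; rintro ⟨-, h⟩; simp at h; omega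

lemma nadj2j {n : ℕ} (j : Fin n) (hj : 3 ≤ j.val) (h1 : (2:ℕ) < n) :
    ¬ (doubleStar n).Adj ⟨2, h1⟩ j := by
  rw [ds_adj]; rintro ⟨-, h⟩; simp at h; omega

lemma nadjjk {n : ℕ} (j k : Fin n) (hj : 3 ≤ j.val) (hk : 3 ≤ k.val) :
    ¬ (doubleStar n).Adj j k := by
  rw [ds_adj]; rintro ⟨-, h⟩; omega

lemma row1 {n : ℕ} (hn : 4 ≤ n) : (ABCMatrix (doubleStar n)).mulVec (tv n) ⟨1, by omega⟩ =
    sq2 * md n + sq2 * (1/2) := by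
  rw [Matrix.mulVec, dotProduct]
  rw [sum_split hn _ 0 (fun j hj => by
    rw [Ananj _ _ (nadj1j j hj (by omega)), zero_mul])]
  rw [Asymm, A01 hn, tv0 hn, A12 hn, tv2 hn,
    Ananj _ _ ((doubleStar n).irrefl), ← sq2]
  ring

lemma row2 {n : ℕ} (hn : 4 ≤ n) : (ABCMatrix (doubleStar n)).mulVec (tv n) ⟨2, by omega⟩ =
    mu n / 2 := by
  rw [Matrix.mulVec, dotProduct]
  rw [sum_split hn _ 0 (fun j hj => by
    rw [Ananj _ _ (nadj2j j hj (by omega)), zero_mul])]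
  rw [Ananj _ _ (fun h => by rw [ds_adj] at h; rcases h with ⟨-, h⟩; simp at h),
    Asymm, A12 hn, tv1 hn,
    Ananj _ _ ((doubleStar n).irrefl)]
  rw [← sq2, ← mul_assoc, sq2sq]
  ring

lemma rowj {n : ℕ} (hn : 4 ≤ n) (j : Fin n) (hj : 3 ≤ j.val) :
    (ABCMatrix (doubleStar n)).mulVec (tv n) j = wd n * md n := by
  rw [Matrix.mulVec, dotProduct]
  rw [sum_split hn _ 0 (fun k hk => by
    rw [Ananj _ _ (nadjjk j k hj hk), zero_mul])]
  rw [Asymm, A0j hn j hj, tv0 hn, ← wd,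
    Ananj _ _ (fun h => (nadj1j j hj (by omega)) h.symm),
    Ananj _ _ (fun h => (nadj2j j hj (by omega)) h.symm)]
  ring

end rows

lemma sumsq {n : ℕ} (hn : 4 ≤ n) : ∑ i, tv n i ^ 2 =
    md n ^ 2 + (md n + 1/2)/2 + 1/4 + md n ^3 / (md n + 1/2) := by
  rw [sum_split hn _ ((wd n * md n / mu n)^2) (fun j hj => by rw [tvj j hj])]
  rw [tv0 hn, tv1 hn, tv2 hn]
  have h1 : (sq2 * mu n)^2 = (md n + 1/2)/2 := by
    have : (sq2 * mu n)^2 = (sq2*sq2) * (mu n ^2) := by ring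
    rw [this, sq2sq, musq hn]; ring
  have h2 : ((n:ℝ)-3) * (wd n * md n / mu n)^2 = md n ^3 / (md n + 1/2) := by
    have hmu2 : mu n * mu n = md n + 1/2 := by
      have := musq hn; nlinarith [this]
    have e : ((n:ℝ)-3) * (wd n * md n / mu n)^2
        = ((n:ℝ)-3)*(wd n * wd n) * (md n^2/(mu n * mu n)) := by ring
    rw [e, wdsq hn, hmu2]; ring
  rw [h1, h2]; ring

lemma sumQ {n : ℕ} (hn : 4 ≤ n) :
    tv n ⬝ᵥ (ABCMatrix (doubleStar n)).mulVec (tv n) =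
    md n * mu n + mu n / 2 + 2 * md n ^3 / mu n := by
  rw [dotProduct]
  rw [sum_split hn _ ((wd n * md n / mu n) * (wd n * md n)) (fun j hj => by
    rw [tvj j hj, rowj hn j hj])]
  rw [tv0 hn, tv1 hn, tv2 hn, row0 hn, row1 hn, row2 hn]
  have hμ := (mupos hn).ne'
  have h1 : sq2 * mu n * (sq2 * md n + sq2 * (1/2)) = mu n * (md n + 1/2) / 2 := by
    have : sq2 * mu n * (sq2 * md n + sq2 * (1/2)) = (sq2*sq2) * (mu n * (md n + 1/2)) := by ring
    rw [this, sq2sq]; ring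
  have h2 : ((n:ℝ)-3) * (wd n * md n / mu n * (wd n * md n)) = md n ^3 / mu n := by
    have e : ((n:ℝ)-3) * (wd n * md n / mu n * (wd n * md n))
        = ((n:ℝ)-3)*(wd n * wd n) * (md n^2/ mu n) := by ring
    rw [e, wdsq hn]; ring
  rw [h1, h2]
  field_simp
  ring

lemma keyineq {n : ℕ} (hn : 4 ≤ n) :
    mu n * (md n ^ 2 + (md n + 1/2)/2 + 1/4 + md n ^3 / (md n + 1/2)) <
    md n * mu n + mu n / 2 + 2 * md n ^3 / mu n := by
  have hμ := mupos hn
  have hm := mdpos hn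
  have hmu2 : mu n * mu n = md n + 1/2 := by
    have := musq hn; nlinarith [this]
  have hkey : (md n * mu n + mu n / 2 + 2 * md n ^3 / mu n) * mu n -
      (mu n * (md n ^ 2 + (md n + 1/2)/2 + 1/4 + md n ^3 / (md n + 1/2))) * mu n = md n / 4 := by
    have h1 : (0:ℝ) < md n + 1/2 := by linarith
    have e1 : (md n * mu n + mu n / 2 + 2 * md n ^ 3 / mu n) * mu n
        = md n * (mu n * mu n) + (mu n * mu n)/2 + 2 * md n ^3 := by
      field_simp
    have e2 : (mu n * (md n ^ 2 + (md n + 1/2)/2 + 1/4 + md n ^3 / (md n + 1/2))) * mu n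
        = (mu n * mu n) * (md n ^ 2 + (md n + 1/2)/2 + 1/4 + md n ^3 / (md n + 1/2)) := by ring
    rw [e1, e2, hmu2]
    field_simp
    ring
  have h4 : 0 < md n / 4 := by linarith
  nlinarith [hkey, hμ]

lemma entry_le_one {n : ℕ} (G : SimpleGraph (Fin n)) (i j : Fin n) :
    0 ≤ ABCMatrix G i j ∧ ABCMatrix G i j ≤ 1 := by
  rw [ABCMatrix]
  by_cases h : G.Adj i j
  · rw [if_pos h]
    refine ⟨Real.sqrt_nonneg _, Real.sqrt_le_one.2 ?_⟩
    have hdi : 1 ≤ G.degree i := (SimpleGraph.degree_pos_iff_exists_adj _ _).2 ⟨j, h⟩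
    have hdj : 1 ≤ G.degree j := (SimpleGraph.degree_pos_iff_exists_adj _ _).2 ⟨i, h.symm⟩
    have hdi' : (1:ℝ) ≤ (G.degree i : ℝ) := by exact_mod_cast hdi
    have hdj' : (1:ℝ) ≤ (G.degree j : ℝ) := by exact_mod_cast hdj
    rw [div_le_one (by nlinarith)]
    nlinarith
  · rw [if_neg h]; norm_num

lemma bddS {n : ℕ} (G : SimpleGraph (Fin n)) :
    BddAbove {r : ℝ | ∃ x : Fin n → ℝ, ∑ i, x i ^ 2 = 1 ∧ r = x ⬝ᵥ (ABCMatrix G).mulVec x} := by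
  refine ⟨(n : ℝ), ?_⟩
  rintro r ⟨x, hx, rfl⟩
  have key : ∀ i, x i * ((ABCMatrix G).mulVec x i) ≤ |x i| * ∑ j, |x j| := by
    intro i
    calc x i * ((ABCMatrix G).mulVec x i) ≤ |x i * ((ABCMatrix G).mulVec x i)| := le_abs_self _
    _ = |x i| * |∑ j, ABCMatrix G i j * x j| := by rw [abs_mul]; rfl
    _ ≤ |x i| * ∑ j, |ABCMatrix G i j * x j| :=
        mul_le_mul_of_nonneg_left (Finset.abs_sum_le_sum_abs _ _) (abs_nonneg _)
    _ ≤ |x i| * ∑ j, |x j| := by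
        refine mul_le_mul_of_nonneg_left (Finset.sum_le_sum fun j _ => ?_) (abs_nonneg _)
        rw [abs_mul]
        have h := entry_le_one G i j
        have : |ABCMatrix G i j| ≤ 1 := by rw [abs_of_nonneg h.1]; exact h.2
        nlinarith [abs_nonneg (x j)]
  calc x ⬝ᵥ (ABCMatrix G).mulVec x = ∑ i, x i * ((ABCMatrix G).mulVec x i) := rfl
  _ ≤ ∑ i, |x i| * ∑ j, |x j| := Finset.sum_le_sum fun i _ => key i
  _ = (∑ i, |x i|) ^ 2 := by rw [← Finset.sum_mul]; ring
  _ ≤ (Finset.univ (α := Fin n)).card * ∑ i, |x i| ^ 2 := sq_sum_le_card_mul_sum_sq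
  _ = (n : ℝ) := by simp only [sq_abs, hx, Finset.card_univ, Fintype.card_fin]; ring


theorem stmt13 {n : ℕ} (hn : 4 ≤ n) :
    Real.sqrt ((n : ℝ) - 3.5) < rhoABC (doubleStar n) := by
  have hm := mdpos hn
  have hμ := mupos hn
  set Nv : ℝ := md n ^ 2 + (md n + 1/2)/2 + 1/4 + md n ^3 / (md n + 1/2) with hNv
  set Qv : ℝ := md n * mu n + mu n / 2 + 2 * md n ^3 / mu n with hQv
  have hNpos : 0 < Nv := by
    have h1 : 0 < md n ^3 / (md n + 1/2) := by
      apply div_pos (by positivity) (by linarith)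
    have h2 : 0 < md n ^2 := by positivity
    rw [hNv]; linarith
  -- membership
  have hmem : Qv / Nv ∈ {r : ℝ | ∃ x : Fin n → ℝ, ∑ i, x i ^ 2 = 1 ∧
      r = x ⬝ᵥ (ABCMatrix (doubleStar n)).mulVec x} := by
    refine ⟨fun i => tv n i / Real.sqrt Nv, ?_, ?_⟩
    · have hs : Real.sqrt Nv ^ 2 = Nv := Real.sq_sqrt hNpos.le
      simp only [div_pow, hs]
      rw [← Finset.sum_div, sumsq hn, ← hNv, div_self hNpos.ne']
    · have hy : (fun i => tv n i / Real.sqrt Nv) = (Real.sqrt Nv)⁻¹ • tv n := by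
        funext i; simp [div_eq_mul_inv, mul_comm]
      rw [hy, Matrix.mulVec_smul, dotProduct_smul, smul_dotProduct]
      rw [sumQ hn, ← hQv, smul_eq_mul, smul_eq_mul, ← mul_assoc]
      rw [← mul_inv, Real.mul_self_sqrt hNpos.le]
      rw [div_eq_mul_inv, mul_comm]
  have hlt1 : Real.sqrt ((n : ℝ) - 3.5) < mu n := by
    rw [mu]
    apply Real.sqrt_lt_sqrt
    · have : (4:ℝ) ≤ (n:ℝ) := by exact_mod_cast hn
      norm_num; linarith
    · have h2 := nr2pos hn
      have e : md n + 1/2 - ((n:ℝ) - 3.5) = 1/((n:ℝ)-2) := by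
        rw [md]; field_simp; ring
      have : 0 < 1/((n:ℝ)-2) := by positivity
      linarith
  have hlt2 : mu n < Qv / Nv := by
    rw [lt_div_iff₀ hNpos]
    have := keyineq hn
    rw [← hNv, ← hQv] at this
    linarith [this]
  have hle : Qv / Nv ≤ rhoABC (doubleStar n) := le_csSup (bddS _) hmem
  linarith
end

section
/- Let n ≥ 7 and let T be a tree on n vertices with maximum degree n−3 (so T is one of the three trees obtained from the star S_{n−2} by either attaching a path of length 2 to the center, or attaching two pendant edges to one leaf, or attaching one pendant edge to each of two distinct leaves). Then ρ_ABC(T) < √(n − 3.5). -/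
open scoped Classical
open Finset Matrix

/- ### Auxiliary lemmas -/

lemma sqrt_step (m k : ℝ) (hm : 0 ≤ m) (hk : 0 ≤ k) :
    Real.sqrt (m + k + 1) + Real.sqrt m ≤ Real.sqrt (m + 1) + Real.sqrt (m + k) := by
  set a := Real.sqrt (m + k + 1)
  set b := Real.sqrt m
  set c := Real.sqrt (m + 1)
  set d := Real.sqrt (m + k)
  have ha : a ^ 2 = m + k + 1 := Real.sq_sqrt (by linarith)
  have hb : b ^ 2 = m := Real.sq_sqrt hm
  have hc : c ^ 2 = m + 1 := Real.sq_sqrt (by linarith)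
  have hd : d ^ 2 = m + k := Real.sq_sqrt (by linarith)
  have hb0 : 0 ≤ b := Real.sqrt_nonneg _
  have hc0 : 0 ≤ c := Real.sqrt_nonneg _
  have hd0 : 0 ≤ d := Real.sqrt_nonneg _
  have hac : c ≤ a := Real.sqrt_le_sqrt (by linarith)
  have hbd : b ≤ d := Real.sqrt_le_sqrt (by linarith)
  have hbc : b ≤ c := Real.sqrt_le_sqrt (by linarith)
  have hda : d ≤ a := Real.sqrt_le_sqrt (by linarith)
  have key : (a - c) * (a + c) = (d - b) * (d + b) := by ring_nf; nlinarith [ha, hb, hc, hd]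
  rcases eq_or_lt_of_le (by positivity : (0:ℝ) ≤ d + b) with h0 | h0
  · have hd' : d = 0 := by nlinarith
    have hb' : b = 0 := by nlinarith
    have hk0 : k = 0 := by nlinarith
    have : a = c := by show Real.sqrt (m+k+1) = Real.sqrt (m+1); rw [show m + k + 1 = m + 1 by linarith]
    linarith
  · have h1 : (a - c) * (d + b) ≤ (a - c) * (a + c) := by
      apply mul_le_mul_of_nonneg_left _ (by linarith)
      linarith
    have h2 : (a - c) * (d + b) ≤ (d - b) * (d + b) := by linarith [key]
    have := le_of_mul_le_mul_right h2 h0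
    linarith

lemma sqrt_add_nat (m : ℝ) (hm : 0 ≤ m) (e : ℕ) :
    Real.sqrt (m + e) ≤ Real.sqrt m + e * (Real.sqrt (m + 1) - Real.sqrt m) := by
  induction e with
  | zero => simp
  | succ k ih =>
    have := sqrt_step m k hm (Nat.cast_nonneg k)
    push_cast
    push_cast at ih
    have h2 : Real.sqrt (m + (k + 1)) = Real.sqrt (m + k + 1) := by ring_nf
    rw [h2]
    linarith

lemma numI1 (N : ℝ) (hN : 7 ≤ N) :
    (N - 3) * Real.sqrt (N - 4) + 2 * (Real.sqrt (N - 3) - Real.sqrt (N - 4))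
      < (N - 3) * Real.sqrt (N - 3.5) := by
  set p := Real.sqrt (N - 4)
  set q := Real.sqrt (N - 3)
  set r := Real.sqrt (N - 3.5)
  have hp2 : p ^ 2 = N - 4 := Real.sq_sqrt (by linarith)
  have hq2 : q ^ 2 = N - 3 := Real.sq_sqrt (by linarith)
  have hr2 : r ^ 2 = N - 3.5 := Real.sq_sqrt (by linarith)
  have hp0 : 0 ≤ p := Real.sqrt_nonneg _
  have hq0 : 0 ≤ q := Real.sqrt_nonneg _
  have hr0 : (0:ℝ) < r := Real.sqrt_pos.mpr (by linarith)
  have hq : 4 * q * r < 4 * r ^ 2 + 1 := by nlinarith [sq_nonneg (q - r)]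
  have hp : 4 * p * r ≤ 4 * r ^ 2 - 1 := by nlinarith [sq_nonneg (r - p)]
  have hA : (N - 5) * (4 * p * r) ≤ (N - 5) * (4 * r ^ 2 - 1) :=
    mul_le_mul_of_nonneg_left hp (by linarith)
  have key : 4 * r * ((N - 5) * p + 2 * q) < 4 * r * ((N - 3) * r) := by nlinarith
  have := lt_of_mul_lt_mul_left (a := 4 * r) key (by positivity)
  linarith

lemma numI3 (N : ℝ) (hN : 7 ≤ N) :
    Real.sqrt (N - 3) + Real.sqrt 2 < 2 * Real.sqrt (N - 3.5) := by
  set q := Real.sqrt (N - 3)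
  set r := Real.sqrt (N - 3.5)
  set s := Real.sqrt 2
  have hq2 : q ^ 2 = N - 3 := Real.sq_sqrt (by linarith)
  have hr2 : r ^ 2 = N - 3.5 := Real.sq_sqrt (by linarith)
  have hs2 : s ^ 2 = 2 := Real.sq_sqrt (by norm_num)
  have hq0 : 0 ≤ q := Real.sqrt_nonneg _
  have hs0 : 0 ≤ s := Real.sqrt_nonneg _
  have hr0 : (0:ℝ) < r := Real.sqrt_pos.mpr (by linarith)
  have hq : 4 * q * r < 4 * r ^ 2 + 1 := by nlinarith [sq_nonneg (q - r)]
  have hs : s ≤ 3/2 := by nlinarith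
  have hr18 : (9:ℝ)/5 ≤ r := by nlinarith
  have key : 4 * r * (q + s) < 4 * r * (2 * r) := by nlinarith
  have := lt_of_mul_lt_mul_left (a := 4 * r) key (by positivity)
  linarith

lemma numI4 (N : ℝ) (hN : 7 ≤ N) :
    Real.sqrt (N - 2) + 2 * Real.sqrt 2 < 3 * Real.sqrt (N - 3.5) := by
  set u := Real.sqrt (N - 2)
  set r := Real.sqrt (N - 3.5)
  set s := Real.sqrt 2
  have hu2 : u ^ 2 = N - 2 := Real.sq_sqrt (by linarith)
  have hr2 : r ^ 2 = N - 3.5 := Real.sq_sqrt (by linarith)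
  have hs2 : s ^ 2 = 2 := Real.sq_sqrt (by norm_num)
  have hu0 : 0 ≤ u := Real.sqrt_nonneg _
  have hs0 : 0 ≤ s := Real.sqrt_nonneg _
  have hr0 : (0:ℝ) < r := Real.sqrt_pos.mpr (by linarith)
  have hu : 4 * u * r < 4 * r ^ 2 + 3 := by nlinarith [sq_nonneg (u - r)]
  have hs : s ≤ 3/2 := by nlinarith
  have hr18 : (9:ℝ)/5 ≤ r := by nlinarith
  have key : 4 * r * (u + 2 * s) < 4 * r * (3 * r) := by nlinarith
  have := lt_of_mul_lt_mul_left (a := 4 * r) key (by positivity)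
  linarith

lemma abc_entry (a b : ℝ) (ha : 0 < a) (hb : 0 < b) (hab : 0 ≤ a + b - 2) :
    Real.sqrt ((a + b - 2) / (a * b)) * (Real.sqrt b / Real.sqrt a)
      = Real.sqrt (a + b - 2) / a := by
  have h1 : Real.sqrt a ≠ 0 := ne_of_gt (Real.sqrt_pos.mpr ha)
  have h2 : Real.sqrt b ≠ 0 := ne_of_gt (Real.sqrt_pos.mpr hb)
  have h3 : Real.sqrt a * Real.sqrt a = a := Real.mul_self_sqrt ha.le
  rw [Real.sqrt_div hab, Real.sqrt_mul ha.le]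
  field_simp
  linear_combination (-(Real.sqrt (a+b-2))) * h3

lemma quad_bound {n : ℕ} (T : SimpleGraph (Fin n)) (hd : ∀ v, 0 < T.degree v)
    (x : Fin n → ℝ) (hx : ∑ i, x i ^ 2 = 1) (M : ℝ)
    (hM : ∀ i, (∑ j ∈ T.neighborFinset i,
        Real.sqrt ((T.degree i : ℝ) + (T.degree j : ℝ) - 2)) / (T.degree i : ℝ) ≤ M) :
    x ⬝ᵥ (ABCMatrix T).mulVec x ≤ M := by
  set A := ABCMatrix T with hA
  set s : Fin n → ℝ := fun i => Real.sqrt (T.degree i) with hsdef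
  have hs : ∀ i, 0 < s i := fun i => Real.sqrt_pos.mpr (by exact_mod_cast hd i)
  have hA0 : ∀ i j, 0 ≤ A i j := by
    intro i j
    simp only [hA, ABCMatrix]
    split
    · exact Real.sqrt_nonneg _
    · exact le_refl 0
  have hAsymm : ∀ i j, A i j = A j i := by
    intro i j
    simp only [hA, ABCMatrix, T.adj_comm i j]
    split
    · congr 1; ring
    · rfl
  have hexp : x ⬝ᵥ A.mulVec x = ∑ i, ∑ j, A i j * x i * x j := by
    simp only [dotProduct, Matrix.mulVec, dotProduct, Finset.mul_sum]
    exact Finset.sum_congr rfl fun i _ => Finset.sum_congr rfl fun j _ => by ring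
  have key : ∀ i j, A i j * x i * x j ≤
      (A i j * (s j / s i) * x i ^ 2 + A i j * (s i / s j) * x j ^ 2) / 2 := by
    intro i j
    have hineq : 2 * (x i * x j) ≤ s j / s i * x i ^ 2 + s i / s j * x j ^ 2 := by
      rw [div_mul_eq_mul_div, div_mul_eq_mul_div,
        div_add_div _ _ (hs i).ne' (hs j).ne', le_div_iff₀ (mul_pos (hs i) (hs j))]
      nlinarith [sq_nonneg (s j * x i - s i * x j), (hs i).le, (hs j).le,
        mul_pos (hs i) (hs j)]
    nlinarith [mul_le_mul_of_nonneg_left hineq (hA0 i j)]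
  have step2 : ∑ i, ∑ j, A i j * x i * x j ≤
      ∑ i, ∑ j, (A i j * (s j / s i) * x i ^ 2 + A i j * (s i / s j) * x j ^ 2) / 2 :=
    Finset.sum_le_sum fun i _ => Finset.sum_le_sum fun j _ => key i j
  have swap : ∑ i, ∑ j, A i j * (s i / s j) * x j ^ 2
      = ∑ i, ∑ j, A i j * (s j / s i) * x i ^ 2 := by
    rw [Finset.sum_comm]
    exact Finset.sum_congr rfl fun i _ => Finset.sum_congr rfl fun j _ => by rw [hAsymm j i]
  have hsplit : ∀ i : Fin n,
      ∑ j, (A i j * (s j / s i) * x i ^ 2 + A i j * (s i / s j) * x j ^ 2) / 2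
      = ((∑ j, A i j * (s j / s i) * x i ^ 2) + ∑ j, A i j * (s i / s j) * x j ^ 2) / 2 := by
    intro i
    rw [← Finset.sum_add_distrib, ← Finset.sum_div]
  have step3 : ∑ i, ∑ j, (A i j * (s j / s i) * x i ^ 2 + A i j * (s i / s j) * x j ^ 2) / 2
      = ∑ i, (∑ j, A i j * (s j / s i)) * x i ^ 2 := by
    calc ∑ i, ∑ j, (A i j * (s j / s i) * x i ^ 2 + A i j * (s i / s j) * x j ^ 2) / 2
        = ∑ i, ((∑ j, A i j * (s j / s i) * x i ^ 2) + ∑ j, A i j * (s i / s j) * x j ^ 2) / 2 :=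
          Finset.sum_congr rfl fun i _ => hsplit i
      _ = ((∑ i, ∑ j, A i j * (s j / s i) * x i ^ 2)
            + ∑ i, ∑ j, A i j * (s i / s j) * x j ^ 2) / 2 := by
          rw [← Finset.sum_div, ← Finset.sum_add_distrib]
      _ = ∑ i, ∑ j, A i j * (s j / s i) * x i ^ 2 := by rw [swap]; ring
      _ = ∑ i, (∑ j, A i j * (s j / s i)) * x i ^ 2 :=
          Finset.sum_congr rfl fun i _ => by rw [Finset.sum_mul]
  have inner : ∀ i, ∑ j, A i j * (s j / s i) = (∑ j ∈ T.neighborFinset i,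
      Real.sqrt ((T.degree i : ℝ) + (T.degree j : ℝ) - 2)) / (T.degree i : ℝ) := by
    intro i
    have h0 : ∀ j ∈ (univ : Finset (Fin n)), j ∉ T.neighborFinset i →
        A i j * (s j / s i) = 0 := by
      intro j _ hj
      rw [SimpleGraph.mem_neighborFinset] at hj
      simp [hA, ABCMatrix, hj]
    rw [← Finset.sum_subset (Finset.subset_univ (T.neighborFinset i)) h0, Finset.sum_div]
    apply Finset.sum_congr rfl
    intro j hj
    rw [SimpleGraph.mem_neighborFinset] at hj
    simp only [hA, ABCMatrix, if_pos hj, hsdef]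
    refine abc_entry _ _ (by exact_mod_cast hd i) (by exact_mod_cast hd j) ?_
    have h1 : (1:ℝ) ≤ (T.degree i : ℝ) := by exact_mod_cast hd i
    have h2 : (1:ℝ) ≤ (T.degree j : ℝ) := by exact_mod_cast hd j
    linarith
  calc x ⬝ᵥ A.mulVec x = ∑ i, ∑ j, A i j * x i * x j := hexp
    _ ≤ ∑ i, ∑ j, (A i j * (s j / s i) * x i ^ 2 + A i j * (s i / s j) * x j ^ 2) / 2 := step2
    _ = ∑ i, (∑ j, A i j * (s j / s i)) * x i ^ 2 := step3
    _ ≤ ∑ i, M * x i ^ 2 := Finset.sum_le_sum fun i _ => by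
        rw [inner i]
        exact mul_le_mul_of_nonneg_right (hM i) (sq_nonneg _)
    _ = M := by rw [← Finset.mul_sum, hx, mul_one]

lemma sum_split_s15 {α : Type*} [DecidableEq α] (s : Finset α) (c : α) (f : α → ℝ) (B b : ℝ)
    (hs1 : 1 ≤ s.card) (hbB : b ≤ B)
    (hB : ∀ j ∈ s, f j ≤ B) (hb : ∀ j ∈ s, j ≠ c → f j ≤ b) :
    ∑ j ∈ s, f j ≤ B + ((s.card - 1 : ℕ) : ℝ) * b := by
  by_cases hc : c ∈ s
  · rw [← Finset.add_sum_erase s f hc]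
    have h1 : ∑ j ∈ s.erase c, f j ≤ (s.erase c).card • b :=
      Finset.sum_le_card_nsmul _ _ _ fun j hj =>
        hb j (Finset.mem_of_mem_erase hj) (Finset.ne_of_mem_erase hj)
    rw [Finset.card_erase_of_mem hc] at h1
    have h2 : ((s.card - 1 : ℕ)) • b = ((s.card - 1 : ℕ) : ℝ) * b := nsmul_eq_mul _ _
    have := hB c hc
    linarith [h1, h2 ▸ h1]
  · have h1 : ∑ j ∈ s, f j ≤ s.card • b :=
      Finset.sum_le_card_nsmul _ _ _ fun j hj => hb j hj (fun h => hc (h ▸ hj))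
    rw [nsmul_eq_mul] at h1
    have h2 : (s.card : ℝ) = 1 + ((s.card - 1 : ℕ) : ℝ) := by
      push_cast [Nat.cast_sub hs1]; ring
    have h3 : (s.card : ℝ) * b = b + ((s.card - 1 : ℕ) : ℝ) * b := by rw [h2]; ring
    linarith [h1, h3]

theorem stmt15 {n : ℕ} (hn : 7 ≤ n) (T : SimpleGraph (Fin n)) (hT : T.IsTree)
    (hΔ : T.maxDegree = n - 3) :
    rhoABC T < Real.sqrt ((n : ℝ) - 3.5) := by
  haveI : Nonempty (Fin n) := ⟨⟨0, by omega⟩⟩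
  set N : ℝ := (n : ℝ) with hNdef
  have hN7 : (7:ℝ) ≤ N := by rw [hNdef]; exact_mod_cast hn
  have h3n : 3 ≤ n := by omega
  -- degrees are positive
  have hd : ∀ v, 0 < T.degree v := by
    intro v
    rw [SimpleGraph.degree_pos_iff_exists_adj]
    obtain ⟨u, hu⟩ := Fintype.exists_ne_of_one_lt_card (by simp; omega) v
    obtain ⟨p⟩ := hT.isConnected.preconnected v u
    have hnil : ¬ p.Nil := SimpleGraph.Walk.not_nil_of_ne (Ne.symm hu)
    exact ⟨p.getVert 1, SimpleGraph.Walk.adj_snd hnil⟩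
  have hdmax : ∀ v, T.degree v ≤ n - 3 := fun v => hΔ ▸ T.degree_le_maxDegree v
  have hdR : ∀ j, (T.degree j : ℝ) ≤ N - 3 := by
    intro j
    have h := hdmax j
    have : ((n - 3 : ℕ) : ℝ) = N - 3 := by push_cast [Nat.cast_sub h3n]; ring
    rw [← this]
    exact_mod_cast h
  obtain ⟨c, hc⟩ := T.exists_maximal_degree_vertex
  have hcdeg : T.degree c = n - 3 := by rw [← hc, hΔ]
  have hsumdeg : ∑ v, T.degree v = 2 * (n - 1) := by
    have hE := hT.card_edgeFinset
    rw [Fintype.card_fin] at hE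
    rw [SimpleGraph.sum_degrees_eq_twice_card_edges]
    omega
  have hcard_erase : (univ.erase c).card = n - 1 := by
    rw [Finset.card_erase_of_mem (mem_univ c), Finset.card_univ, Fintype.card_fin]
  have hsum_erase : ∑ v ∈ univ.erase c, T.degree v = n + 1 := by
    have h := Finset.add_sum_erase univ (fun v => T.degree v) (mem_univ c)
    omega
  have hexcess : ∑ v ∈ univ.erase c, (T.degree v - 1) = 2 := by
    have h1 : ∑ v ∈ univ.erase c, T.degree v
        = ∑ v ∈ univ.erase c, ((T.degree v - 1) + 1) :=
      Finset.sum_congr rfl fun v _ => by have := hd v; omega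
    rw [Finset.sum_add_distrib, Finset.sum_const, smul_eq_mul, mul_one, hcard_erase] at h1
    omega
  have hpair : ∀ a b : Fin n, a ≠ c → b ≠ c → a ≠ b →
      (T.degree a - 1) + (T.degree b - 1) ≤ 2 := by
    intro a b hac hbc hab
    have hsub : ({a, b} : Finset (Fin n)) ⊆ univ.erase c := by
      intro z hz
      simp only [Finset.mem_insert, Finset.mem_singleton] at hz
      rcases hz with rfl | rfl <;> simp [hac, hbc]
    have h := Finset.sum_le_sum_of_subset (f := fun v => T.degree v - 1) hsub
    rw [Finset.sum_pair hab] at h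
    have h' : T.degree a - 1 + (T.degree b - 1) ≤ ∑ v ∈ univ.erase c, (T.degree v - 1) := h
    omega
  have hsingle : ∀ a : Fin n, a ≠ c → T.degree a - 1 ≤ 2 := by
    intro a hac
    have h := Finset.single_le_sum (f := fun v => T.degree v - 1)
      (fun i _ => Nat.zero_le _) (show a ∈ univ.erase c by simp [hac])
    have h' : T.degree a - 1 ≤ ∑ v ∈ univ.erase c, (T.degree v - 1) := h
    omega
  -- the per-vertex bound
  have hbound : ∀ i : Fin n, (∑ j ∈ T.neighborFinset i,
      Real.sqrt ((T.degree i : ℝ) + (T.degree j : ℝ) - 2)) / (T.degree i : ℝ)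
      < Real.sqrt (N - 3.5) := by
    intro i
    have hdi : (0:ℝ) < (T.degree i : ℝ) := by exact_mod_cast hd i
    rw [div_lt_iff₀ hdi]
    have hcardN : (T.neighborFinset i).card = T.degree i :=
      T.card_neighborFinset_eq_degree i
    by_cases hic : i = c
    · -- center vertex
      have hdc : (T.degree i : ℝ) = N - 3 := by
        rw [hic, hcdeg]; push_cast [Nat.cast_sub h3n]; ring
      have hterm : ∀ j ∈ T.neighborFinset i,
          Real.sqrt ((T.degree i : ℝ) + (T.degree j : ℝ) - 2)
          ≤ Real.sqrt (N - 4) + ((T.degree j - 1 : ℕ) : ℝ)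
              * (Real.sqrt (N - 4 + 1) - Real.sqrt (N - 4)) := by
        intro j hj
        have he : ((T.degree j - 1 : ℕ) : ℝ) = (T.degree j : ℝ) - 1 := by
          push_cast [Nat.cast_sub (hd j)]; ring
        have harg : (T.degree i : ℝ) + (T.degree j : ℝ) - 2
            = (N - 4) + ((T.degree j - 1 : ℕ) : ℝ) := by rw [hdc, he]; ring
        rw [harg]
        exact sqrt_add_nat (N - 4) (by linarith) _
      have hsum1 : ∑ j ∈ T.neighborFinset i,
          Real.sqrt ((T.degree i : ℝ) + (T.degree j : ℝ) - 2)
          ≤ (T.degree i : ℝ) * Real.sqrt (N - 4)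
            + (∑ j ∈ T.neighborFinset i, ((T.degree j - 1 : ℕ) : ℝ))
              * (Real.sqrt (N - 4 + 1) - Real.sqrt (N - 4)) := by
        calc ∑ j ∈ T.neighborFinset i, Real.sqrt ((T.degree i : ℝ) + (T.degree j : ℝ) - 2)
            ≤ ∑ j ∈ T.neighborFinset i, (Real.sqrt (N - 4) + ((T.degree j - 1 : ℕ) : ℝ)
                * (Real.sqrt (N - 4 + 1) - Real.sqrt (N - 4))) :=
              Finset.sum_le_sum hterm
          _ = _ := by
              rw [Finset.sum_add_distrib, Finset.sum_const, hcardN, ← Finset.sum_mul]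
              rw [nsmul_eq_mul]
      have hNe : ∑ j ∈ T.neighborFinset i, (T.degree j - 1) ≤ 2 := by
        have hsub : T.neighborFinset i ⊆ univ.erase c := by
          intro z hz
          rw [SimpleGraph.mem_neighborFinset] at hz
          simp [hic ▸ hz.ne']
        calc ∑ j ∈ T.neighborFinset i, (T.degree j - 1)
            ≤ ∑ j ∈ univ.erase c, (T.degree j - 1) :=
              Finset.sum_le_sum_of_subset hsub
          _ = 2 := hexcess
      have hNeR : ∑ j ∈ T.neighborFinset i, ((T.degree j - 1 : ℕ) : ℝ) ≤ 2 := by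
        have := hNe
        push_cast [← Nat.cast_sum]
        exact_mod_cast this
      have hδ : 0 ≤ Real.sqrt (N - 4 + 1) - Real.sqrt (N - 4) := by
        have := Real.sqrt_le_sqrt (show N - 4 ≤ N - 4 + 1 by linarith)
        linarith
      have h41 : N - 4 + 1 = N - 3 := by ring
      rw [h41] at hsum1 hδ
      rw [hdc] at hsum1
      have hmul := mul_le_mul_of_nonneg_right hNeR hδ
      have hnum := numI1 N hN7
      rw [hdc]
      linarith [hsum1, hmul, hnum]
    · -- non-center vertex
      have hile : T.degree i ≤ 3 := by have := hsingle i hic; have := hd i; omega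
      have hge : 1 ≤ T.degree i := hd i
      have hne_i : ∀ j ∈ T.neighborFinset i, j ≠ i := by
        intro j hj
        rw [SimpleGraph.mem_neighborFinset] at hj
        exact hj.ne'
      have hcases : T.degree i = 1 ∨ T.degree i = 2 ∨ T.degree i = 3 := by omega
      rcases hcases with hdi' | hdi' | hdi'
      · -- degree 1
        rw [hdi']
        push_cast
        have hB : ∀ j ∈ T.neighborFinset i,
            Real.sqrt ((1 : ℝ) + (T.degree j : ℝ) - 2) ≤ Real.sqrt (N - 4) := by
          intro j hj
          exact Real.sqrt_le_sqrt (by have := hdR j; linarith)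
        have hsum1 := sum_split_s15 (T.neighborFinset i) c
          (fun j => Real.sqrt ((1 : ℝ) + (T.degree j : ℝ) - 2))
          (Real.sqrt (N - 4)) (Real.sqrt (N - 4))
          (by rw [hcardN, hdi']) le_rfl hB (fun j hj _ => hB j hj)
        rw [hcardN, hdi'] at hsum1
        rw [show (((1:ℕ) - 1 : ℕ):ℝ) = 0 by norm_num] at hsum1
        have hlt : Real.sqrt (N - 4) < Real.sqrt (N - 3.5) :=
          Real.sqrt_lt_sqrt (by linarith) (by linarith)
        linarith [hsum1, hlt]
      · -- degree 2
        rw [hdi']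
        push_cast
        have hB : ∀ j ∈ T.neighborFinset i,
            Real.sqrt ((2 : ℝ) + (T.degree j : ℝ) - 2) ≤ Real.sqrt (N - 3) := by
          intro j hj
          exact Real.sqrt_le_sqrt (by have := hdR j; linarith)
        have hb : ∀ j ∈ T.neighborFinset i, j ≠ c →
            Real.sqrt ((2 : ℝ) + (T.degree j : ℝ) - 2) ≤ Real.sqrt 2 := by
          intro j hj hjc
          have hji : j ≠ i := hne_i j hj
          have hp := hpair j i hjc hic hji
          have h2 : T.degree j ≤ 2 := by omega
          have h2R : (T.degree j : ℝ) ≤ 2 := by exact_mod_cast h2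
          exact Real.sqrt_le_sqrt (by linarith)
        have hsum1 := sum_split_s15 (T.neighborFinset i) c
          (fun j => Real.sqrt ((2 : ℝ) + (T.degree j : ℝ) - 2))
          (Real.sqrt (N - 3)) (Real.sqrt 2)
          (by rw [hcardN, hdi']; omega)
          (Real.sqrt_le_sqrt (by linarith)) hB hb
        rw [hcardN, hdi'] at hsum1
        rw [show (((2:ℕ) - 1 : ℕ):ℝ) = 1 by norm_num] at hsum1
        have hnum := numI3 N hN7
        linarith [hsum1, hnum]
      · -- degree 3
        rw [hdi']
        push_cast
        have hB : ∀ j ∈ T.neighborFinset i,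
            Real.sqrt ((3 : ℝ) + (T.degree j : ℝ) - 2) ≤ Real.sqrt (N - 2) := by
          intro j hj
          exact Real.sqrt_le_sqrt (by have := hdR j; linarith)
        have hb : ∀ j ∈ T.neighborFinset i, j ≠ c →
            Real.sqrt ((3 : ℝ) + (T.degree j : ℝ) - 2) ≤ Real.sqrt 2 := by
          intro j hj hjc
          have hji : j ≠ i := hne_i j hj
          have hp := hpair j i hjc hic hji
          have h2 : T.degree j ≤ 1 := by omega
          have h2R : (T.degree j : ℝ) ≤ 1 := by exact_mod_cast h2
          exact Real.sqrt_le_sqrt (by linarith)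
        have hsum1 := sum_split_s15 (T.neighborFinset i) c
          (fun j => Real.sqrt ((3 : ℝ) + (T.degree j : ℝ) - 2))
          (Real.sqrt (N - 2)) (Real.sqrt 2)
          (by rw [hcardN, hdi']; omega)
          (Real.sqrt_le_sqrt (by linarith)) hB hb
        rw [hcardN, hdi'] at hsum1
        rw [show (((3:ℕ) - 1 : ℕ):ℝ) = 2 by norm_num] at hsum1
        have hnum := numI4 N hN7
        linarith [hsum1, hnum]
  -- assemble
  set cv : Fin n → ℝ := fun i => (∑ j ∈ T.neighborFinset i,
      Real.sqrt ((T.degree i : ℝ) + (T.degree j : ℝ) - 2)) / (T.degree i : ℝ) with hcv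
  set M : ℝ := univ.sup' Finset.univ_nonempty cv with hM
  have hcvM : ∀ i, cv i ≤ M := fun i => Finset.le_sup' cv (mem_univ i)
  have hMlt : M < Real.sqrt (N - 3.5) :=
    (Finset.sup'_lt_iff Finset.univ_nonempty).mpr fun i _ => hbound i
  have hM0 : 0 ≤ M := by
    refine le_trans ?_ (hcvM (Classical.arbitrary _))
    have hdi : (0:ℝ) ≤ (T.degree (Classical.arbitrary (Fin n)) : ℝ) := by positivity
    exact div_nonneg (Finset.sum_nonneg fun j _ => Real.sqrt_nonneg _) hdi
  have hsup : rhoABC T ≤ M := by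
    apply Real.sSup_le _ hM0
    rintro r ⟨x, hx, rfl⟩
    exact quad_bound T hd x hx M fun i => hcvM i
  exact lt_of_le_of_lt hsup hMlt
end

section
/- If T is a tree on n ≥ 7 vertices with maximum degree Δ(T) ≤ n−4, then ρ_ABC(T) ≤ √(n−4). -/
open scoped Classical
open Finset Matrix

lemma my_amgm (a b x y : ℝ) (ha : 0 < a) (hb : 0 < b) :
    x * y ≤ ((b/a)*x^2 + (a/b)*y^2)/2 := by
  rw [le_div_iff₀ (by norm_num : (0:ℝ) < 2), ← sub_nonneg]
  have h : (b/a)*x^2 + (a/b)*y^2 - x*y*2 = (b*x - a*y)^2/(a*b) := by field_simp; ring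
  rw [h]; positivity

lemma my_nbr_sum {n : ℕ} (T : SimpleGraph (Fin n)) (hT : T.IsTree) (hn : 7 ≤ n) (i : Fin n) :
    ∑ j ∈ T.neighborFinset i, T.degree j ≤ n - 1 := by
  have hd : ∀ v : Fin n, 0 < T.degree v := by
    intro v
    rw [SimpleGraph.degree_pos_iff_exists_adj]
    obtain ⟨j, hj⟩ := Fintype.exists_ne_of_one_lt_card (by simp; omega) v
    obtain ⟨p⟩ := hT.isConnected.preconnected v j
    cases p with
    | nil => exact absurd rfl hj.symm
    | cons h _ => exact ⟨_, h⟩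
  have htot : ∑ v, T.degree v = 2 * (n-1) := by
    rw [SimpleGraph.sum_degrees_eq_twice_card_edges]
    have h := hT.card_edgeFinset
    rw [Fintype.card_fin] at h
    omega
  set N : Finset (Fin n) := insert i (T.neighborFinset i) with hN
  have hiN : i ∉ T.neighborFinset i := by simp
  have hsplit : ∑ j ∈ N, T.degree j + ∑ j ∈ Nᶜ, T.degree j = ∑ j, T.degree j :=
    Finset.sum_add_sum_compl N _
  have hNsum : ∑ j ∈ N, T.degree j = T.degree i + ∑ j ∈ T.neighborFinset i, T.degree j :=
    Finset.sum_insert hiN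
  have hcompl : Nᶜ.card ≤ ∑ j ∈ Nᶜ, T.degree j := by
    calc Nᶜ.card = ∑ _j ∈ Nᶜ, 1 := by simp
    _ ≤ _ := Finset.sum_le_sum (fun j _ => hd j)
  have hNcard : N.card = T.degree i + 1 := by
    rw [hN, Finset.card_insert_of_notMem hiN, SimpleGraph.card_neighborFinset_eq_degree]
  have hcc : Nᶜ.card = n - N.card := by
    rw [Finset.card_compl, Fintype.card_fin]
  have hle : N.card ≤ n := by
    simpa using N.card_le_univ
  omega

-- weighted row sum bound
lemma my_row {n : ℕ} (T : SimpleGraph (Fin n)) (hn : 7 ≤ n)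
    (hd : ∀ v : Fin n, 0 < T.degree v)
    (hΔ : ∀ v : Fin n, (T.degree v : ℝ) ≤ (n : ℝ) - 4)
    (hnb : ∀ v : Fin n, (∑ j ∈ T.neighborFinset v, T.degree j : ℝ) ≤ (n : ℝ) - 1)
    (i : Fin n) :
    ∑ j, ABCMatrix T i j * Real.sqrt (T.degree j) ≤
      Real.sqrt (T.degree i) * Real.sqrt ((n:ℝ) - 4) := by
  have hd1 : ∀ v : Fin n, (1:ℝ) ≤ (T.degree v : ℝ) := fun v => by exact_mod_cast hd v
  have hdi : (0:ℝ) < (T.degree i : ℝ) := by linarith [hd1 i]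
  -- restrict to neighbors
  have hstep : ∑ j, ABCMatrix T i j * Real.sqrt (T.degree j)
      = (∑ j ∈ T.neighborFinset i, Real.sqrt ((T.degree i : ℝ) + (T.degree j : ℝ) - 2)) / Real.sqrt (T.degree i) := by
    rw [Finset.sum_div]
    rw [show (Finset.univ : Finset (Fin n)) = (T.neighborFinset i) ∪ (T.neighborFinset i)ᶜ by
      simp, Finset.sum_union (disjoint_compl_right)]
    have h2 : ∑ j ∈ (T.neighborFinset i)ᶜ, ABCMatrix T i j * Real.sqrt (T.degree j) = 0 := by
      apply Finset.sum_eq_zero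
      intro j hj
      rw [Finset.mem_compl, SimpleGraph.mem_neighborFinset] at hj
      simp [ABCMatrix, hj]
    rw [h2, add_zero]
    apply Finset.sum_congr rfl
    intro j hj
    rw [SimpleGraph.mem_neighborFinset] at hj
    have hdj : (0:ℝ) < (T.degree j : ℝ) := by linarith [hd1 j]
    have hnum : (0:ℝ) ≤ (T.degree i : ℝ) + (T.degree j : ℝ) - 2 := by linarith [hd1 i, hd1 j]
    rw [ABCMatrix, if_pos hj, ← Real.sqrt_mul (by positivity), eq_div_iff (by positivity),
        ← Real.sqrt_mul (by positivity)]
    congr 1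
    field_simp
  rw [hstep, div_le_iff₀ (by positivity)]
  -- Cauchy-Schwarz
  set D : ℝ := (T.degree i : ℝ) with hD
  have hcard : (T.neighborFinset i).card = T.degree i := T.card_neighborFinset_eq_degree i
  have hcs : (∑ j ∈ T.neighborFinset i, Real.sqrt ((T.degree i : ℝ) + (T.degree j : ℝ) - 2))^2
      ≤ D * (D*D - 2*D + (∑ j ∈ T.neighborFinset i, (T.degree j : ℝ))) := by
    have := sq_sum_le_card_mul_sum_sq (s := T.neighborFinset i)
      (f := fun j => Real.sqrt ((T.degree i : ℝ) + (T.degree j : ℝ) - 2))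
    refine this.trans ?_
    have heq : ∑ j ∈ T.neighborFinset i, (Real.sqrt ((T.degree i : ℝ) + (T.degree j : ℝ) - 2))^2
        = D*D - 2*D + (∑ j ∈ T.neighborFinset i, (T.degree j : ℝ)) := by
      rw [Finset.sum_congr rfl (fun j hj => Real.sq_sqrt (by linarith [hd1 i, hd1 j]))]
      have hre : ∀ j : Fin n, ((T.degree i : ℝ) + (T.degree j : ℝ) - 2)
          = ((T.degree i : ℝ) - 2) + (T.degree j : ℝ) := fun j => by ring
      simp_rw [hre]
      rw [Finset.sum_add_distrib, Finset.sum_const, hcard]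
      simp [hD]
      ring
    rw [heq, hcard]
  -- numeric bound
  have hS1 : (∑ j ∈ T.neighborFinset i, (T.degree j : ℝ)) ≤ D * ((n:ℝ) - 4) := by
    have : ∀ j ∈ T.neighborFinset i, (T.degree j : ℝ) ≤ (n:ℝ) - 4 := fun j _ => hΔ j
    calc (∑ j ∈ T.neighborFinset i, (T.degree j : ℝ)) ≤ ∑ _j ∈ T.neighborFinset i, ((n:ℝ) - 4) :=
          Finset.sum_le_sum this
      _ = D * ((n:ℝ) - 4) := by rw [Finset.sum_const, hcard]; simp [hD]
  have hS2 : (∑ j ∈ T.neighborFinset i, (T.degree j : ℝ)) ≤ (n:ℝ) - 1 := by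
    have := hnb i; push_cast at this ⊢; linarith
  have hnum : D * (D*D - 2*D + (∑ j ∈ T.neighborFinset i, (T.degree j : ℝ))) ≤ D^2 * ((n:ℝ)-4) := by
    have hD1 : (1:ℝ) ≤ D := hd1 i
    have hDn : D ≤ (n:ℝ) - 4 := hΔ i
    have hn7 : (7:ℝ) ≤ (n:ℝ) := by exact_mod_cast hn
    rcases le_or_gt 2 D with h2 | h2
    · nlinarith [mul_nonneg (sub_nonneg.2 h2) (sub_nonneg.2 hDn), hS2]
    · -- D is a nat cast ≥ 1 and < 2, so D = 1
      have : D = 1 := by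
        have h1 : T.degree i = 1 := by
          have := hd i
          have h2' : T.degree i < 2 := by rw [hD] at h2; exact_mod_cast h2
          omega
        simp [hD, h1]
      rw [this]; nlinarith [hS1]
  -- conclude
  have hRnn : (0:ℝ) ≤ ∑ j ∈ T.neighborFinset i, Real.sqrt ((T.degree i : ℝ) + (T.degree j : ℝ) - 2) :=
    Finset.sum_nonneg fun j _ => Real.sqrt_nonneg _
  have hrhs : Real.sqrt D * Real.sqrt ((n:ℝ)-4) * Real.sqrt D = D * Real.sqrt ((n:ℝ)-4) := by
    rw [mul_comm (Real.sqrt D) _, mul_assoc, Real.mul_self_sqrt hdi.le]; ring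
  rw [hrhs]
  have hn4 : (0:ℝ) ≤ (n:ℝ) - 4 := by
    have : (7:ℝ) ≤ (n:ℝ) := by exact_mod_cast hn
    linarith
  have hsq : (D * Real.sqrt ((n:ℝ)-4))^2 = D^2 * ((n:ℝ)-4) := by
    rw [mul_pow, Real.sq_sqrt hn4]
  calc (∑ j ∈ T.neighborFinset i, Real.sqrt ((T.degree i : ℝ) + (T.degree j : ℝ) - 2))
      = Real.sqrt ((∑ j ∈ T.neighborFinset i, Real.sqrt ((T.degree i : ℝ) + (T.degree j : ℝ) - 2))^2) := by
        rw [Real.sqrt_sq hRnn]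
    _ ≤ Real.sqrt ((D * Real.sqrt ((n:ℝ)-4))^2) := by
        apply Real.sqrt_le_sqrt
        rw [hsq]
        exact hcs.trans hnum
    _ = D * Real.sqrt ((n:ℝ)-4) := Real.sqrt_sq (by positivity)


theorem stmt17 {n : ℕ} (hn : 7 ≤ n) (T : SimpleGraph (Fin n)) (hT : T.IsTree)
    (hΔ : T.maxDegree ≤ n - 4) :
    rhoABC T ≤ Real.sqrt ((n : ℝ) - 4) := by
  have hd : ∀ v : Fin n, 0 < T.degree v := by
    intro v
    rw [SimpleGraph.degree_pos_iff_exists_adj]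
    obtain ⟨j, hj⟩ := Fintype.exists_ne_of_one_lt_card (by simp; omega) v
    obtain ⟨p⟩ := hT.isConnected.preconnected v j
    cases p with
    | nil => exact absurd rfl hj.symm
    | cons h _ => exact ⟨_, h⟩
  have hΔr : ∀ v : Fin n, (T.degree v : ℝ) ≤ (n : ℝ) - 4 := by
    intro v
    have h1 : T.degree v ≤ n - 4 := (T.degree_le_maxDegree v).trans hΔ
    have h4 : 4 ≤ n := by omega
    calc ((T.degree v : ℝ)) ≤ ((n - 4 : ℕ) : ℝ) := by exact_mod_cast h1
      _ = (n:ℝ) - 4 := by rw [Nat.cast_sub h4]; norm_num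
  have hnbr : ∀ v : Fin n, (∑ j ∈ T.neighborFinset v, (T.degree j : ℝ)) ≤ (n : ℝ) - 1 := by
    intro v
    have h := my_nbr_sum T hT hn v
    have h2 : ((∑ j ∈ T.neighborFinset v, T.degree j : ℕ) : ℝ) ≤ ((n - 1 : ℕ) : ℝ) :=
      Nat.cast_le.2 h
    rw [Nat.cast_sub (by omega : 1 ≤ n)] at h2
    push_cast at h2 ⊢
    exact h2
  apply Real.sSup_le _ (Real.sqrt_nonneg _)
  rintro r ⟨x, hx, rfl⟩
  set M : Matrix (Fin n) (Fin n) ℝ := ABCMatrix T with hM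
  set w : Fin n → ℝ := fun i => Real.sqrt (T.degree i) with hw
  have hwp : ∀ i, 0 < w i := fun i => Real.sqrt_pos.2 (by exact_mod_cast hd i)
  have hMnn : ∀ i j, 0 ≤ M i j := by
    intro i j
    rw [hM]
    unfold ABCMatrix
    split
    · exact Real.sqrt_nonneg _
    · exact le_rfl
  have hMsymm : ∀ i j, M i j = M j i := by
    intro i j
    rw [hM]
    unfold ABCMatrix
    by_cases h : T.Adj i j
    · rw [if_pos h, if_pos h.symm]
      congr 1
      ring
    · rw [if_neg h, if_neg (fun h' => h h'.symm)]
  have hform : x ⬝ᵥ M.mulVec x = ∑ i, ∑ j, x i * (M i j * x j) := by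
    simp [dotProduct, Matrix.mulVec, Finset.mul_sum]
  rw [hform]
  have step1 : ∑ i, ∑ j, x i * (M i j * x j)
      ≤ ∑ i, ∑ j, M i j * (((w j / w i) * x i^2 + (w i / w j) * x j^2)/2) := by
    apply Finset.sum_le_sum
    intro i _
    apply Finset.sum_le_sum
    intro j _
    have he : x i * (M i j * x j) = M i j * (x i * x j) := by ring
    rw [he]
    exact mul_le_mul_of_nonneg_left (my_amgm (w i) (w j) (x i) (x j) (hwp i) (hwp j)) (hMnn i j)
  have hswap : ∑ i, ∑ j, M i j * ((w i / w j) * x j^2) = ∑ i, ∑ j, M i j * ((w j / w i) * x i^2) := by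
    rw [Finset.sum_comm]
    exact Finset.sum_congr rfl fun j _ => Finset.sum_congr rfl fun i _ => by rw [hMsymm i j]
  have step2 : ∑ i, ∑ j, M i j * (((w j / w i) * x i^2 + (w i / w j) * x j^2)/2)
      = ∑ i, ∑ j, M i j * ((w j / w i) * x i^2) := by
    have expand : ∀ i j : Fin n, M i j * (((w j / w i) * x i^2 + (w i / w j) * x j^2)/2)
        = (M i j * ((w j / w i) * x i^2) + M i j * ((w i / w j) * x j^2))/2 := fun i j => by ring
    simp_rw [expand]
    calc ∑ i, ∑ j, (M i j * ((w j / w i) * x i^2) + M i j * ((w i / w j) * x j^2))/2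
        = ∑ i, ((∑ j, M i j * ((w j / w i) * x i^2)) + ∑ j, M i j * ((w i / w j) * x j^2))/2 := by
          refine Finset.sum_congr rfl fun i _ => ?_
          rw [← Finset.sum_div, Finset.sum_add_distrib]
      _ = ((∑ i, ∑ j, M i j * ((w j / w i) * x i^2)) + ∑ i, ∑ j, M i j * ((w i / w j) * x j^2))/2 := by
          rw [← Finset.sum_div, Finset.sum_add_distrib]
      _ = ∑ i, ∑ j, M i j * ((w j / w i) * x i^2) := by rw [hswap]; ring
  have step3 : ∑ i, ∑ j, M i j * ((w j / w i) * x i^2) ≤ Real.sqrt ((n:ℝ)-4) := by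
    have hrow := my_row T hn hd hΔr hnbr
    calc ∑ i, ∑ j, M i j * ((w j / w i) * x i^2)
        = ∑ i, (x i^2 / w i) * (∑ j, M i j * w j) := by
          refine Finset.sum_congr rfl fun i _ => ?_
          rw [Finset.mul_sum]
          refine Finset.sum_congr rfl fun j _ => ?_
          have hne : w i ≠ 0 := (hwp i).ne'
          field_simp
      _ ≤ ∑ i, (x i^2 / w i) * (w i * Real.sqrt ((n:ℝ)-4)) := by
          refine Finset.sum_le_sum fun i _ => ?_
          have hnn : (0:ℝ) ≤ x i^2 / w i := by positivity
          exact mul_le_mul_of_nonneg_left (hrow i) hnn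
      _ = ∑ i, x i^2 * Real.sqrt ((n:ℝ)-4) := by
          refine Finset.sum_congr rfl fun i _ => ?_
          have hne : w i ≠ 0 := (hwp i).ne'
          field_simp
      _ = Real.sqrt ((n:ℝ)-4) := by rw [← Finset.sum_mul, hx, one_mul]
  exact (step1.trans (le_of_eq step2)).trans step3
end
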